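/- arXiv:1609.05314 — 10 statements merged into one kernel-verified Lean document; each statement's English description precedes it below -/
import Mathlib

section
/- Let δ ∈ (0,1), a > 0 and A > 0 be real numbers. Define B(χ) = a·χ^δ, C(χ) = a·I(χ,δ), and ρ(χ) = (e^{B(χ)−C(χ)} − 1)/√((e^A − 1)(e^{B(χ)} − 1)) for χ > 0. Then ρ(χ) → 0 as χ → 0⁺. -/
open Real Filter Set MeasureTheory

/-- `Ifun u δ = δ·∫₀ᵘ t^δ/(1+t) dt`. -/
noncomputable def Ifun (u δ : ℝ) : ℝ := δ * ∫ t in (0:ℝ)..u, t ^ δ / (1 + t)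

lemma Ifun_nonneg {u δ : ℝ} (hu : 0 ≤ u) (hδ : 0 < δ) : 0 ≤ Ifun u δ := by
  apply mul_nonneg hδ.le
  apply intervalIntegral.integral_nonneg hu
  intro t ht
  exact div_nonneg (Real.rpow_nonneg ht.1 δ) (by linarith [ht.1])

lemma Ifun_le {u δ : ℝ} (hu : 0 < u) (hu1 : u ≤ 1) (hδ0 : 0 < δ) (hδ1 : δ < 1) :
    Ifun u δ ≤ u ^ δ := by
  have cont1 : ContinuousOn (fun t : ℝ => t ^ δ) (Icc 0 u) := by
    intro t _
    exact (Real.continuousAt_rpow_const t δ (Or.inr hδ0.le)).continuousWithinAt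
  have cont2 : ContinuousOn (fun t : ℝ => t ^ δ / (1 + t)) (Icc 0 u) := by
    apply cont1.div (by fun_prop)
    intro t ht
    have := ht.1
    intro h; linarith
  have int1 : IntervalIntegrable (fun t : ℝ => t ^ δ / (1 + t)) volume 0 u := by
    apply ContinuousOn.intervalIntegrable
    rwa [uIcc_of_le hu.le]
  have int2 : IntervalIntegrable (fun t : ℝ => t ^ δ) volume 0 u := by
    apply ContinuousOn.intervalIntegrable
    rwa [uIcc_of_le hu.le]
  have hmono : (∫ t in (0:ℝ)..u, t ^ δ / (1 + t)) ≤ ∫ t in (0:ℝ)..u, t ^ δ := by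
    apply intervalIntegral.integral_mono_on hu.le int1 int2
    intro t ht
    exact div_le_self (Real.rpow_nonneg ht.1 δ) (by linarith [ht.1])
  have hval : (∫ t in (0:ℝ)..u, t ^ δ) = u ^ (δ + 1) / (δ + 1) := by
    rw [integral_rpow (Or.inl (by linarith : (-1:ℝ) < δ))]
    rw [Real.zero_rpow (by linarith : δ + 1 ≠ 0)]
    ring
  have h1 : Ifun u δ ≤ δ * (u ^ (δ + 1) / (δ + 1)) := by
    unfold Ifun
    exact mul_le_mul_of_nonneg_left (hval ▸ hmono) hδ0.le
  have h2 : δ * (u ^ (δ + 1) / (δ + 1)) ≤ u ^ (δ + 1) := by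
    rw [mul_div_assoc']
    apply div_le_of_le_mul₀ (by linarith) (Real.rpow_nonneg hu.le _)
    nlinarith [Real.rpow_nonneg hu.le (δ + 1)]
  have h3 : u ^ (δ + 1) ≤ u ^ δ :=
    Real.rpow_le_rpow_of_exponent_ge hu hu1 (by linarith)
  linarith

theorem correlation_tendsto_zero_at_zero
    (δ a A : ℝ) (hδ : δ ∈ Set.Ioo (0:ℝ) 1) (ha : 0 < a) (hA : 0 < A)
    (B C ρ : ℝ → ℝ)
    (hB : ∀ χ, B χ = a * χ ^ δ)
    (hC : ∀ χ, C χ = a * Ifun χ δ)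
    (hρ : ∀ χ, 0 < χ → ρ χ =
      (Real.exp (B χ - C χ) - 1) /
        Real.sqrt ((Real.exp A - 1) * (Real.exp (B χ) - 1))) :
    Filter.Tendsto ρ (nhdsWithin 0 (Set.Ioi 0)) (nhds 0) := by
  obtain ⟨hδ0, hδ1⟩ := hδ
  have hA' : (0:ℝ) < Real.exp A - 1 := by
    have : (1:ℝ) < Real.exp A := by
      rw [← Real.exp_zero]; exact Real.exp_lt_exp.mpr hA
    linarith
  set g : ℝ → ℝ := fun χ => Real.sqrt ((Real.exp (a * χ ^ δ) - 1) / (Real.exp A - 1))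
    with hg
  have hgtend : Tendsto g (nhdsWithin 0 (Set.Ioi 0)) (nhds 0) := by
    have h1 : Tendsto (fun χ : ℝ => χ ^ δ) (nhdsWithin 0 (Set.Ioi 0)) (nhds 0) := by
      have := (Real.continuousAt_rpow_const 0 δ (Or.inr hδ0.le)).tendsto
      rw [Real.zero_rpow hδ0.ne'] at this
      exact this.mono_left nhdsWithin_le_nhds
    have h2 : Continuous (fun y : ℝ => Real.sqrt ((Real.exp (a * y) - 1) / (Real.exp A - 1))) := by
      fun_prop
    have h3 := (h2.tendsto 0).comp h1
    simp only [Function.comp, mul_zero, Real.exp_zero, sub_self, zero_div,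
      Real.sqrt_zero] at h3
    exact h3
  have hbound : ∀ᶠ χ in nhdsWithin 0 (Set.Ioi 0), 0 ≤ ρ χ ∧ ρ χ ≤ g χ := by
    filter_upwards [Ioo_mem_nhdsGT_of_mem (Set.mem_Ico.mpr ⟨le_refl 0, zero_lt_one⟩)]
      with χ hχ
    obtain ⟨hχ0, hχ1⟩ := hχ
    have hBpos : 0 < B χ := by
      rw [hB]; exact mul_pos ha (Real.rpow_pos_of_pos hχ0 δ)
    have hC0 : 0 ≤ C χ := by
      rw [hC]; exact mul_nonneg ha.le (Ifun_nonneg hχ0.le hδ0)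
    have hCB : C χ ≤ B χ := by
      rw [hB, hC]
      exact mul_le_mul_of_nonneg_left (Ifun_le hχ0 hχ1.le hδ0 hδ1) ha.le
    have hB' : (0:ℝ) < Real.exp (B χ) - 1 := by
      have : (1:ℝ) < Real.exp (B χ) := by
        rw [← Real.exp_zero]; exact Real.exp_lt_exp.mpr hBpos
      linarith
    have hD : 0 < Real.sqrt ((Real.exp A - 1) * (Real.exp (B χ) - 1)) :=
      Real.sqrt_pos.mpr (mul_pos hA' hB')
    have hnum0 : 0 ≤ Real.exp (B χ - C χ) - 1 := by
      have : (1:ℝ) ≤ Real.exp (B χ - C χ) := by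
        rw [← Real.exp_zero]; exact Real.exp_le_exp.mpr (by linarith)
      linarith
    have hnum1 : Real.exp (B χ - C χ) - 1 ≤ Real.exp (B χ) - 1 := by
      have : Real.exp (B χ - C χ) ≤ Real.exp (B χ) :=
        Real.exp_le_exp.mpr (by linarith)
      linarith
    rw [hρ χ hχ0]
    constructor
    · exact div_nonneg hnum0 hD.le
    · have key : (Real.exp (B χ) - 1) / Real.sqrt ((Real.exp A - 1) * (Real.exp (B χ) - 1))
          = g χ := by
        have hgval : g χ = Real.sqrt ((Real.exp (B χ) - 1) / (Real.exp A - 1)) := by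
          simp only [hg]; rw [← hB χ]
        rw [hgval]
        rw [Real.sqrt_div hB'.le, Real.sqrt_mul hA'.le]
        nth_rewrite 1 [show Real.exp (B χ) - 1 = Real.sqrt (Real.exp (B χ) - 1) *
            Real.sqrt (Real.exp (B χ) - 1) from (Real.mul_self_sqrt hB'.le).symm]
        rw [mul_comm (Real.sqrt (Real.exp A - 1))]
        rw [mul_div_mul_left _ _ (ne_of_gt (Real.sqrt_pos.mpr hB'))]
      rw [← key]
      gcongr
  refine tendsto_of_tendsto_of_tendsto_of_le_of_le' tendsto_const_nhds hgtend
    (hbound.mono fun χ h => h.1) (hbound.mono fun χ h => h.2)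
end

section
/- Let δ ∈ (0,1), a > 0 and A > 0 be real numbers. Define B(χ) = a·χ^δ, C(χ) = a·I(χ,δ), and ρ(χ) = (e^{B(χ)−C(χ)} − 1)/√((e^A − 1)(e^{B(χ)} − 1)) for χ > 0. Then ρ(χ) → 0 as χ → ∞. -/
open Real Filter Set MeasureTheory

lemma Ifun_diff_bound {δ : ℝ} (hδ0 : 0 < δ) (hδ1 : δ < 1) {χ : ℝ} (hχ : 1 ≤ χ) :
    χ ^ δ - Ifun χ δ ∈ Set.Icc (0:ℝ) (1 + δ / (1 - δ)) := by
  have hχ0 : (0:ℝ) < χ := lt_of_lt_of_le one_pos hχ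
  have hcont : ContinuousOn (fun t : ℝ => t ^ δ / (1 + t)) (Set.uIcc (0:ℝ) χ) := by
    apply ContinuousOn.div
    · exact fun x _ => (Real.continuousAt_rpow_const x δ (Or.inr hδ0.le)).continuousWithinAt
    · fun_prop
    · intro x hx
      rw [Set.uIcc_of_le hχ0.le] at hx
      nlinarith [hx.1]
  have hint1 : IntervalIntegrable (fun t : ℝ => t ^ δ / (1 + t)) volume 0 χ :=
    hcont.intervalIntegrable
  have hint2 : IntervalIntegrable (fun t : ℝ => t ^ (δ - 1)) volume 0 χ :=
    intervalIntegral.intervalIntegrable_rpow' (by linarith)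
  have hd1 : δ - 1 + 1 = δ := by ring
  have hpow : χ ^ δ = δ * ∫ t in (0:ℝ)..χ, t ^ (δ - 1) := by
    rw [integral_rpow (Or.inl (by linarith)), hd1, Real.zero_rpow hδ0.ne']
    field_simp
    ring
  have key : χ ^ δ - Ifun χ δ = δ * ∫ t in (0:ℝ)..χ, t ^ (δ - 1) / (1 + t) := by
    rw [hpow, Ifun, ← mul_sub, ← intervalIntegral.integral_sub hint2 hint1]
    congr 1
    apply intervalIntegral.integral_congr
    intro t ht
    rw [Set.uIcc_of_le hχ0.le] at ht
    rcases eq_or_lt_of_le ht.1 with h0 | h0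
    · simp only [← h0, Real.zero_rpow hδ0.ne', Real.zero_rpow (by linarith : δ - 1 ≠ 0)]
      norm_num
    · have ht1 : (0:ℝ) < 1 + t := by linarith
      show t ^ (δ - 1) - t ^ δ / (1 + t) = t ^ (δ - 1) / (1 + t)
      rw [Real.rpow_sub_one h0.ne']
      field_simp
      ring
  have hint3 : IntervalIntegrable (fun t : ℝ => t ^ (δ - 1) / (1 + t)) volume 0 χ := by
    simp_rw [div_eq_mul_inv]
    apply hint2.mul_continuousOn
    apply ContinuousOn.inv₀ (by fun_prop)
    intro x hx
    rw [Set.uIcc_of_le hχ0.le] at hx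
    nlinarith [hx.1]
  have hmem1 : (1:ℝ) ∈ Set.uIcc (0:ℝ) χ := by
    rw [Set.uIcc_of_le hχ0.le]; exact ⟨zero_le_one, hχ⟩
  have hint3a : IntervalIntegrable (fun t : ℝ => t ^ (δ - 1) / (1 + t)) volume 0 1 :=
    hint3.mono_set (Set.uIcc_subset_uIcc Set.left_mem_uIcc hmem1)
  have hint3b : IntervalIntegrable (fun t : ℝ => t ^ (δ - 1) / (1 + t)) volume 1 χ :=
    hint3.mono_set (Set.uIcc_subset_uIcc hmem1 Set.right_mem_uIcc)
  constructor
  · rw [key]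
    apply mul_nonneg hδ0.le
    apply intervalIntegral.integral_nonneg hχ0.le
    intro t ht
    exact div_nonneg (Real.rpow_nonneg ht.1 _) (by linarith [ht.1])
  · have hsplit : (∫ t in (0:ℝ)..χ, t ^ (δ - 1) / (1 + t)) =
        (∫ t in (0:ℝ)..1, t ^ (δ - 1) / (1 + t)) +
        ∫ t in (1:ℝ)..χ, t ^ (δ - 1) / (1 + t) :=
      (intervalIntegral.integral_add_adjacent_intervals hint3a hint3b).symm
    rw [key, hsplit]
    have hI1 : (∫ t in (0:ℝ)..1, t ^ (δ - 1) / (1 + t)) ≤ 1 / δ := by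
      have hle : (∫ t in (0:ℝ)..1, t ^ (δ - 1) / (1 + t)) ≤ ∫ t in (0:ℝ)..1, t ^ (δ - 1) := by
        apply intervalIntegral.integral_mono_on zero_le_one hint3a
          (intervalIntegral.intervalIntegrable_rpow' (by linarith))
        intro t ht
        apply div_le_self (Real.rpow_nonneg ht.1 _)
        linarith [ht.1]
      have heq : (∫ t in (0:ℝ)..1, t ^ (δ - 1)) = 1 / δ := by
        rw [integral_rpow (Or.inl (by linarith)), hd1, Real.zero_rpow hδ0.ne',
          Real.one_rpow]
        simp
      linarith
    have hI2 : (∫ t in (1:ℝ)..χ, t ^ (δ - 1) / (1 + t)) ≤ 1 / (1 - δ) := by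
      have h1 : (∫ t in (1:ℝ)..χ, t ^ (δ - 1) / (1 + t)) ≤ ∫ t in (1:ℝ)..χ, t ^ (δ - 2) := by
        apply intervalIntegral.integral_mono_on hχ hint3b
          (intervalIntegral.intervalIntegrable_rpow
            (Or.inr (Set.notMem_uIcc_of_lt zero_lt_one hχ0)))
        intro t ht
        have ht1 : (1:ℝ) ≤ t := ht.1
        have ht0 : (0:ℝ) < t := lt_of_lt_of_le one_pos ht1
        have heq : t ^ (δ - 2) = t ^ (δ - 1) / t := by
          rw [show δ - 2 = δ - 1 - 1 from by ring, Real.rpow_sub_one ht0.ne']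
        rw [heq]
        apply div_le_div_of_nonneg_left (Real.rpow_nonneg ht0.le _) ht0 (by linarith)
      have h2 : (∫ t in (1:ℝ)..χ, t ^ (δ - 2)) ≤ 1 / (1 - δ) := by
        rw [integral_rpow
          (Or.inr ⟨by intro h; linarith, Set.notMem_uIcc_of_lt zero_lt_one hχ0⟩)]
        have hd2 : δ - 2 + 1 = δ - 1 := by ring
        rw [hd2, Real.one_rpow]
        have hχd : χ ^ (δ - 1) ≤ 1 := by
          calc χ ^ (δ - 1) ≤ χ ^ (0:ℝ) :=
                Real.rpow_le_rpow_of_exponent_le hχ (by linarith)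
            _ = 1 := Real.rpow_zero χ
        have hχd0 : 0 < χ ^ (δ - 1) := Real.rpow_pos_of_pos hχ0 _
        have h3 : (χ ^ (δ - 1) - 1) / (δ - 1) = (1 - χ ^ (δ - 1)) / (1 - δ) := by
          rw [div_eq_div_iff (by linarith) (by linarith)]
          ring
        rw [h3, div_le_div_iff₀ (by linarith) (by linarith)]
        nlinarith
      linarith
    calc δ * ((∫ t in (0:ℝ)..1, t ^ (δ - 1) / (1 + t)) +
          ∫ t in (1:ℝ)..χ, t ^ (δ - 1) / (1 + t))
        ≤ δ * (1 / δ + 1 / (1 - δ)) := by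
          apply mul_le_mul_of_nonneg_left (by linarith) hδ0.le
      _ = 1 + δ / (1 - δ) := by field_simp

theorem correlation_tendsto_zero_at_infty
    (δ a A : ℝ) (hδ : δ ∈ Set.Ioo (0:ℝ) 1) (ha : 0 < a) (hA : 0 < A)
    (B C ρ : ℝ → ℝ)
    (hB : ∀ χ, B χ = a * χ ^ δ)
    (hC : ∀ χ, C χ = a * Ifun χ δ)
    (hρ : ∀ χ, 0 < χ → ρ χ =
      (Real.exp (B χ - C χ) - 1) /
        Real.sqrt ((Real.exp A - 1) * (Real.exp (B χ) - 1))) :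
    Filter.Tendsto ρ Filter.atTop (nhds 0) := by
  obtain ⟨hδ0, hδ1⟩ := hδ
  set K : ℝ := 1 + δ / (1 - δ) with hK
  set M : ℝ := Real.exp (a * K) - 1 with hM
  set g : ℝ → ℝ := fun χ => M / Real.sqrt ((Real.exp A - 1) * (Real.exp (a * χ ^ δ) - 1))
    with hg
  have hA1 : 0 < Real.exp A - 1 := by
    have := Real.add_one_lt_exp hA.ne'
    linarith
  -- denominator → ∞
  have hden : Tendsto (fun χ : ℝ => (Real.exp A - 1) * (Real.exp (a * χ ^ δ) - 1))
      atTop atTop := by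
    apply Tendsto.const_mul_atTop hA1
    apply tendsto_atTop_add_const_right _ (-1 : ℝ)
    exact Real.tendsto_exp_atTop.comp ((tendsto_rpow_atTop hδ0).const_mul_atTop ha)
  have hsqrt : Tendsto (fun χ : ℝ =>
      Real.sqrt ((Real.exp A - 1) * (Real.exp (a * χ ^ δ) - 1))) atTop atTop := by
    have h12 : Tendsto (fun x : ℝ => x ^ ((1:ℝ)/2)) atTop atTop :=
      tendsto_rpow_atTop (by norm_num)
    refine (h12.comp hden).congr' ?_
    filter_upwards [hden.eventually_ge_atTop 0] with χ hχ
    simp only [Function.comp]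
    rw [Real.sqrt_eq_rpow]
  have hgto : Tendsto g atTop (nhds 0) := tendsto_const_nhds.div_atTop hsqrt
  apply squeeze_zero' ?_ ?_ hgto
  · filter_upwards [eventually_ge_atTop (1:ℝ)] with χ hχ
    have hχ0 : (0:ℝ) < χ := lt_of_lt_of_le one_pos hχ
    rw [hρ χ hχ0]
    apply div_nonneg _ (Real.sqrt_nonneg _)
    rw [hB, hC, ← mul_sub]
    have := (Ifun_diff_bound hδ0 hδ1 hχ).1
    have h1 : (1:ℝ) ≤ Real.exp (a * (χ ^ δ - Ifun χ δ)) := by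
      rw [← Real.exp_zero]
      exact Real.exp_le_exp.mpr (mul_nonneg ha.le this)
    linarith
  · filter_upwards [eventually_ge_atTop (1:ℝ)] with χ hχ
    have hχ0 : (0:ℝ) < χ := lt_of_lt_of_le one_pos hχ
    rw [hρ χ hχ0, hB, hC]
    show _ ≤ M / Real.sqrt ((Real.exp A - 1) * (Real.exp (a * χ ^ δ) - 1))
    have hd : 0 < Real.sqrt ((Real.exp A - 1) * (Real.exp (a * χ ^ δ) - 1)) := by
      apply Real.sqrt_pos.mpr
      apply mul_pos hA1
      have : 0 < a * χ ^ δ := mul_pos ha (Real.rpow_pos_of_pos hχ0 δ)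
      linarith [Real.add_one_lt_exp this.ne']
    have hnum : Real.exp (a * χ ^ δ - a * Ifun χ δ) - 1 ≤ M := by
      rw [hM]
      have h2 := (Ifun_diff_bound hδ0 hδ1 hχ).2
      have : a * χ ^ δ - a * Ifun χ δ ≤ a * K := by
        rw [← mul_sub]
        exact mul_le_mul_of_nonneg_left h2 ha.le
      have := Real.exp_le_exp.mpr this
      linarith
    gcongr
end

section
/- Let δ ∈ (0,1), a > 0 and A ≥ a·κ_δ be real numbers, where κ_δ = δ·∫₀^∞ t^{δ−1}/(1+t) dt. Define B(χ) = a·χ^δ, C(χ) = a·I(χ,δ), and ρ(χ) = (e^{B(χ)−C(χ)} − 1)/√((e^A − 1)(e^{B(χ)} − 1)) for χ > 0. Then 0 < ρ(χ) ≤ 1 for every χ > 0. -/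
open Real Filter Set MeasureTheory

/-- `kappa δ = δ·∫₀^∞ t^(δ-1)/(1+t) dt`. -/
noncomputable def kappa (δ : ℝ) : ℝ := δ * ∫ t in Set.Ioi (0:ℝ), t ^ (δ - 1) / (1 + t)

lemma f_intOn {δ : ℝ} (h0 : 0 < δ) (h1 : δ < 1) :
    IntegrableOn (fun t : ℝ => t ^ (δ - 1) / (1 + t)) (Ioi (0:ℝ)) := by
  have hmeas : AEStronglyMeasurable (fun t : ℝ => t ^ (δ - 1) / (1 + t))
      (volume.restrict (Ioi (1:ℝ))) := by
    have hcont : ContinuousOn (fun t : ℝ => t ^ (δ - 1) / (1 + t)) (Ioi (1:ℝ)) := by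
      apply ContinuousOn.div
      · intro x hx
        exact (Real.continuousAt_rpow_const x _
          (Or.inl (ne_of_gt (lt_trans one_pos hx)))).continuousWithinAt
      · fun_prop
      · intro x hx
        have : (1:ℝ) < x := hx
        nlinarith
    exact hcont.aestronglyMeasurable measurableSet_Ioi
  have hIoc : IntegrableOn (fun t : ℝ => t ^ (δ - 1) / (1 + t)) (Ioc (0:ℝ) 1) := by
    have h1' : IntervalIntegrable (fun t : ℝ => t ^ (δ - 1)) volume 0 1 :=
      intervalIntegral.intervalIntegrable_rpow' (by linarith)
    have hcont : ContinuousOn (fun t : ℝ => (1 + t)⁻¹) (Set.uIcc (0:ℝ) 1) := by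
      apply ContinuousOn.inv₀ (by fun_prop)
      intro x hx
      rw [Set.uIcc_of_le zero_le_one] at hx
      nlinarith [hx.1]
    have := h1'.mul_continuousOn hcont
    rw [intervalIntegrable_iff_integrableOn_Ioc_of_le zero_le_one] at this
    simpa [div_eq_mul_inv] using this
  have hIoi : IntegrableOn (fun t : ℝ => t ^ (δ - 1) / (1 + t)) (Ioi (1:ℝ)) := by
    have hb : IntegrableOn (fun t : ℝ => t ^ (δ - 2)) (Ioi (1:ℝ)) :=
      integrableOn_Ioi_rpow_of_lt (by linarith) one_pos
    refine hb.mono' hmeas ?_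
    filter_upwards [ae_restrict_mem measurableSet_Ioi] with t (ht : 1 < t)
    have ht0 : 0 < t := lt_trans one_pos ht
    have hnum : (0:ℝ) ≤ t ^ (δ - 1) := (Real.rpow_pos_of_pos ht0 _).le
    rw [Real.norm_eq_abs, abs_of_nonneg (by positivity)]
    calc t ^ (δ - 1) / (1 + t) ≤ t ^ (δ - 1) / t := by
          apply div_le_div_of_nonneg_left hnum ht0; linarith
      _ = t ^ (δ - 2) := by
          rw [show δ - 2 = (δ - 1) - 1 by ring, Real.rpow_sub ht0 (δ-1) 1, Real.rpow_one]
  have : Ioi (0:ℝ) = Ioc 0 1 ∪ Ioi 1 := (Set.Ioc_union_Ioi_eq_Ioi zero_le_one).symm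
  rw [this]
  exact hIoc.union hIoi

theorem correlation_pos_le_one
    (δ a A : ℝ) (hδ : δ ∈ Set.Ioo (0:ℝ) 1) (ha : 0 < a) (hA : a * kappa δ ≤ A)
    (B C ρ : ℝ → ℝ)
    (hB : ∀ χ, B χ = a * χ ^ δ)
    (hC : ∀ χ, C χ = a * Ifun χ δ)
    (hρ : ∀ χ, 0 < χ → ρ χ =
      (Real.exp (B χ - C χ) - 1) /
        Real.sqrt ((Real.exp A - 1) * (Real.exp (B χ) - 1))) :
    ∀ χ, 0 < χ → 0 < ρ χ ∧ ρ χ ≤ 1 := by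
  obtain ⟨h0, h1⟩ := hδ
  intro χ hχ
  -- interval integrability facts
  have hint1 : IntervalIntegrable (fun t : ℝ => t ^ (δ - 1)) volume 0 χ :=
    intervalIntegral.intervalIntegrable_rpow' (by linarith)
  have hcontinv : ContinuousOn (fun t : ℝ => (1 + t)⁻¹) (Set.uIcc (0:ℝ) χ) := by
    apply ContinuousOn.inv₀ (by fun_prop)
    intro x hx
    rw [Set.uIcc_of_le hχ.le] at hx
    nlinarith [hx.1]
  have hint3 : IntervalIntegrable (fun t : ℝ => t ^ (δ - 1) / (1 + t)) volume 0 χ := by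
    simpa [div_eq_mul_inv] using hint1.mul_continuousOn hcontinv
  have hint2 : IntervalIntegrable (fun t : ℝ => t ^ δ / (1 + t)) volume 0 χ := by
    apply ContinuousOn.intervalIntegrable
    apply ContinuousOn.div
    · intro x _
      exact (Real.continuousAt_rpow_const x _ (Or.inr h0.le)).continuousWithinAt
    · fun_prop
    · intro x hx
      rw [Set.uIcc_of_le hχ.le] at hx
      nlinarith [hx.1]
  -- pointwise identity on [0, χ]
  have hpt : ∀ t ∈ Set.uIcc (0:ℝ) χ,
      t ^ (δ - 1) / (1 + t) = t ^ (δ - 1) - t ^ δ / (1 + t) := by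
    intro t ht
    rw [Set.uIcc_of_le hχ.le] at ht
    rcases eq_or_lt_of_le ht.1 with h | h
    · simp [← h, Real.zero_rpow (by linarith : δ - 1 ≠ 0), Real.zero_rpow (ne_of_gt h0)]
    · have h1t : (0:ℝ) < 1 + t := by linarith
      have : t ^ δ = t ^ (δ - 1) * t := by
        rw [← Real.rpow_add_one (ne_of_gt h) (δ - 1)]; norm_num
      rw [this]
      field_simp
      ring
  have hsplit : ∫ t in (0:ℝ)..χ, t ^ (δ - 1) / (1 + t)
      = (∫ t in (0:ℝ)..χ, t ^ (δ - 1)) - ∫ t in (0:ℝ)..χ, t ^ δ / (1 + t) := by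
    rw [intervalIntegral.integral_congr hpt, intervalIntegral.integral_sub hint1 hint2]
  have hrpow : δ * ∫ t in (0:ℝ)..χ, t ^ (δ - 1) = χ ^ δ := by
    rw [integral_rpow (Or.inl (by linarith))]
    rw [Real.zero_rpow (by linarith : δ - 1 + 1 ≠ 0)]
    rw [sub_add_cancel, sub_zero, mul_div_cancel₀ _ h0.ne']
  -- the quantity J = δ ∫₀^χ t^(δ-1)/(1+t)
  set J : ℝ := δ * ∫ t in (0:ℝ)..χ, t ^ (δ - 1) / (1 + t) with hJ
  have hBC : B χ - C χ = a * J := by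
    rw [hB, hC, Ifun, hJ, hsplit, ← hrpow]
    ring
  have hJpos : 0 < J := by
    apply mul_pos h0
    apply intervalIntegral.intervalIntegral_pos_of_pos_on hint3 _ hχ
    intro x hx
    have hx0 : 0 < x := hx.1
    positivity
  have hJle : J ≤ kappa δ := by
    rw [hJ, kappa]
    apply mul_le_mul_of_nonneg_left _ h0.le
    rw [intervalIntegral.integral_of_le hχ.le]
    apply setIntegral_mono_set (f_intOn h0 h1)
    · filter_upwards [ae_restrict_mem measurableSet_Ioi] with t (ht : 0 < t)
      positivity
    · exact HasSubset.Subset.eventuallyLE (fun x hx => hx.1)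
  have hCnonneg : 0 ≤ C χ := by
    rw [hC, Ifun]
    apply mul_nonneg ha.le
    apply mul_nonneg h0.le
    apply intervalIntegral.integral_nonneg hχ.le
    intro x hx
    have := hx.1
    positivity
  -- key inequalities
  have hx0 : 0 < B χ - C χ := by rw [hBC]; positivity
  have hxA : B χ - C χ ≤ A := by
    rw [hBC]
    calc a * J ≤ a * kappa δ := by nlinarith
      _ ≤ A := hA
  have hxB : B χ - C χ ≤ B χ := by linarith
  have hBpos : 0 < B χ := by rw [hB]; positivity
  have hApos : 0 < A := lt_of_lt_of_le hx0 hxA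
  -- numerator and denominator
  have hN : 0 < Real.exp (B χ - C χ) - 1 := by
    have : (1:ℝ) < Real.exp (B χ - C χ) := by
      rw [show (1:ℝ) = Real.exp 0 by simp]
      exact Real.exp_lt_exp.mpr hx0
    linarith
  have hEA : 0 < Real.exp A - 1 := by
    have : (1:ℝ) < Real.exp A := by
      rw [show (1:ℝ) = Real.exp 0 by simp]
      exact Real.exp_lt_exp.mpr hApos
    linarith
  have hEB : 0 < Real.exp (B χ) - 1 := by
    have : (1:ℝ) < Real.exp (B χ) := by
      rw [show (1:ℝ) = Real.exp 0 by simp]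
      exact Real.exp_lt_exp.mpr hBpos
    linarith
  have hD : 0 < Real.sqrt ((Real.exp A - 1) * (Real.exp (B χ) - 1)) :=
    Real.sqrt_pos.mpr (mul_pos hEA hEB)
  rw [hρ χ hχ]
  refine ⟨div_pos hN hD, ?_⟩
  rw [div_le_one hD]
  have e1 : Real.exp (B χ - C χ) - 1 ≤ Real.exp A - 1 := by
    have := Real.exp_le_exp.mpr hxA; linarith
  have e2 : Real.exp (B χ - C χ) - 1 ≤ Real.exp (B χ) - 1 := by
    have := Real.exp_le_exp.mpr hxB; linarith
  have h2 : (Real.exp (B χ - C χ) - 1) ^ 2 ≤ (Real.exp A - 1) * (Real.exp (B χ) - 1) := by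
    nlinarith
  calc Real.exp (B χ - C χ) - 1
      = Real.sqrt ((Real.exp (B χ - C χ) - 1) ^ 2) := (Real.sqrt_sq hN.le).symm
    _ ≤ _ := Real.sqrt_le_sqrt h2
end

section
/- Let δ ∈ (0,1), a > 0 and A > 0 be real numbers. Define B(χ) = a·χ^δ, C(χ) = a·I(χ,δ), and ρ(χ) = (e^{B(χ)−C(χ)} − 1)/√((e^A − 1)(e^{B(χ)} − 1)) for χ > 0. Then ρ attains a global maximum over (0,∞) at some point χ* > 1, and this maximizer satisfies the equation (1 − χ*)·e^{B(χ*)} + (1 + χ*)·e^{C(χ*)} = 2. -/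
open Real Filter Set MeasureTheory

namespace CGM

lemma one_lt_exp' {x : ℝ} (hx : 0 < x) : 1 < Real.exp x := by
  have := Real.exp_lt_exp.2 hx; rwa [Real.exp_zero] at this

lemma int_f {δ : ℝ} (hδ1 : 0 < δ) {p q : ℝ} (hp : 0 ≤ p) (hq : 0 ≤ q) :
    IntervalIntegrable (fun t => t ^ δ / (1 + t)) MeasureTheory.volume p q := by
  apply ContinuousOn.intervalIntegrable
  intro t ht
  have ht0 : 0 ≤ t := le_trans (le_min hp hq) ht.1
  have h1 : ContinuousAt (fun s : ℝ => s ^ δ / (1 + s)) t := by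
    apply ContinuousAt.div
    · exact Real.continuousAt_rpow_const t δ (Or.inr hδ1.le)
    · exact continuousAt_const.add continuousAt_id
    · positivity
  exact h1.continuousWithinAt

lemma int_f1 {e : ℝ} {p q : ℝ} (hp : 1 ≤ p) (hq : 1 ≤ q) :
    IntervalIntegrable (fun t => t ^ e / (1 + t)) MeasureTheory.volume p q := by
  apply ContinuousOn.intervalIntegrable
  intro t ht
  have ht0 : 1 ≤ t := le_trans (le_min hp hq) ht.1
  have h1 : ContinuousAt (fun s : ℝ => s ^ e / (1 + s)) t := by
    apply ContinuousAt.div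
    · exact Real.continuousAt_rpow_const t e (Or.inl (by linarith))
    · exact continuousAt_const.add continuousAt_id
    · positivity
  exact h1.continuousWithinAt

lemma int_g {δ : ℝ} (hδ1 : 0 < δ) {p q : ℝ} (hp : 0 ≤ p) (hq : 0 ≤ q) :
    IntervalIntegrable (fun t => t ^ (δ - 1) / (1 + t)) MeasureTheory.volume p q := by
  have h1 : IntervalIntegrable (fun t : ℝ => t ^ (δ - 1)) MeasureTheory.volume p q :=
    intervalIntegral.intervalIntegrable_rpow' (by linarith)
  have hcont : ContinuousOn (fun t : ℝ => (1 + t)⁻¹) (Set.uIcc p q) := by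
    apply ContinuousOn.inv₀ (by fun_prop)
    intro t ht
    have ht0 : 0 ≤ t := le_trans (le_min hp hq) ht.1
    positivity
  simpa [div_eq_mul_inv] using h1.mul_continuousOn hcont

lemma int_rpow' {δ : ℝ} (hδ1 : 0 < δ) (p q : ℝ) :
    IntervalIntegrable (fun t : ℝ => t ^ (δ - 1)) MeasureTheory.volume p q :=
  intervalIntegral.intervalIntegrable_rpow' (by linarith)

/-- key identity : `χ^δ - Ifun χ δ = δ * ∫₀^χ t^(δ-1)/(1+t)`. -/
lemma key3 {δ : ℝ} (hδ1 : 0 < δ) (hδ2 : δ < 1) {χ : ℝ} (hχ : 0 < χ) :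
    χ ^ δ - Ifun χ δ = δ * ∫ t in (0:ℝ)..χ, t ^ (δ - 1) / (1 + t) := by
  have hpow : χ ^ δ = δ * ∫ t in (0:ℝ)..χ, t ^ (δ - 1) := by
    rw [integral_rpow (Or.inl (by linarith))]
    rw [sub_add_cancel, Real.zero_rpow hδ1.ne']
    field_simp
    ring
  rw [Ifun, hpow, ← mul_sub, ← intervalIntegral.integral_sub (int_rpow' hδ1 0 χ)
    (int_f hδ1 le_rfl hχ.le)]
  congr 1
  apply intervalIntegral.integral_congr
  intro t ht
  rw [Set.uIcc_of_le hχ.le] at ht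
  rcases eq_or_lt_of_le ht.1 with h | h
  · simp [← h, Real.zero_rpow hδ1.ne', Real.zero_rpow (by linarith : δ - 1 ≠ 0)]
  · have htne : t ≠ 0 := ne_of_gt h
    have h1t : (1:ℝ) + t ≠ 0 := by positivity
    have hts : t ^ δ = t ^ (δ - 1) * t := by
      rw [← Real.rpow_add_one htne, sub_add_cancel]
    field_simp [hts]
    rw [hts]
    ring

lemma Jpos {δ : ℝ} (hδ1 : 0 < δ) (hδ2 : δ < 1) {χ : ℝ} (hχ : 0 < χ) :
    0 < ∫ t in (0:ℝ)..χ, t ^ (δ - 1) / (1 + t) := by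
  apply intervalIntegral.intervalIntegral_pos_of_pos_on (int_g hδ1 le_rfl hχ.le)
  · intro t ht
    have h1 : 0 < t ^ (δ - 1) := Real.rpow_pos_of_pos ht.1 _
    have h2 : 0 < 1 + t := by linarith [ht.1]
    positivity
  · exact hχ

lemma Ipos {δ : ℝ} (hδ1 : 0 < δ) {χ : ℝ} (hχ : 0 < χ) : 0 < Ifun χ δ := by
  rw [Ifun]
  apply mul_pos hδ1
  apply intervalIntegral.intervalIntegral_pos_of_pos_on (int_f hδ1 le_rfl hχ.le)
  · intro t ht
    have h1 : 0 < t ^ δ := Real.rpow_pos_of_pos ht.1 _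
    have h2 : 0 < 1 + t := by linarith [ht.1]
    positivity
  · exact hχ

lemma Jbound {δ : ℝ} (hδ1 : 0 < δ) (hδ2 : δ < 1) {χ : ℝ} (hχ : 0 < χ) :
    (∫ t in (0:ℝ)..χ, t ^ (δ - 1) / (1 + t)) ≤ 1 / δ + 1 / (1 - δ) := by
  have hJ1 : ∀ u : ℝ, 0 < u → u ≤ 1 →
      (∫ t in (0:ℝ)..u, t ^ (δ - 1) / (1 + t)) ≤ 1 / δ := by
    intro u hu hu1
    have hmono : (∫ t in (0:ℝ)..u, t ^ (δ - 1) / (1 + t)) ≤ ∫ t in (0:ℝ)..u, t ^ (δ - 1) := by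
      apply intervalIntegral.integral_mono_on hu.le (int_g hδ1 le_rfl hu.le)
        (int_rpow' hδ1 0 u)
      intro t ht
      have ht0 : 0 ≤ t := ht.1
      have h1 : 0 ≤ t ^ (δ - 1) := Real.rpow_nonneg ht0 _
      exact div_le_self h1 (by linarith)
    have heval : (∫ t in (0:ℝ)..u, t ^ (δ - 1)) = u ^ δ / δ := by
      rw [integral_rpow (Or.inl (by linarith))]
      rw [sub_add_cancel, Real.zero_rpow hδ1.ne']
      ring
    have hle1 : u ^ δ ≤ 1 := by
      calc u ^ δ ≤ 1 ^ δ := Real.rpow_le_rpow hu.le hu1 hδ1.le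
      _ = 1 := Real.one_rpow δ
    calc (∫ t in (0:ℝ)..u, t ^ (δ - 1) / (1 + t)) ≤ u ^ δ / δ := by rw [← heval]; exact hmono
    _ ≤ 1 / δ := (div_le_div_iff_of_pos_right hδ1).2 hle1
  rcases le_or_gt χ 1 with h1 | h1
  · have := hJ1 χ hχ h1
    have h2 : 0 < 1 / (1 - δ) := div_pos one_pos (by linarith)
    linarith
  · have hsplit : (∫ t in (0:ℝ)..1, t ^ (δ - 1) / (1 + t)) +
        (∫ t in (1:ℝ)..χ, t ^ (δ - 1) / (1 + t)) =
        ∫ t in (0:ℝ)..χ, t ^ (δ - 1) / (1 + t) :=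
      intervalIntegral.integral_add_adjacent_intervals (int_g hδ1 le_rfl zero_le_one)
        (int_g hδ1 zero_le_one (by linarith))
    have hint2 : IntervalIntegrable (fun t : ℝ => t ^ (δ - 2)) MeasureTheory.volume 1 χ := by
      apply intervalIntegral.intervalIntegrable_rpow (Or.inr ?_)
      rw [Set.uIcc_of_le h1.le]
      intro hmem
      exact absurd hmem.1 (by norm_num)
    have hmono2 : (∫ t in (1:ℝ)..χ, t ^ (δ - 1) / (1 + t)) ≤ ∫ t in (1:ℝ)..χ, t ^ (δ - 2) := by
      apply intervalIntegral.integral_mono_on h1.le (int_f1 le_rfl h1.le) hint2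
      intro t ht
      have ht1 : 1 ≤ t := ht.1
      have htpos : 0 < t := by linarith
      have hts : t ^ (δ - 2) = t ^ (δ - 1) / t := by
        rw [show δ - 2 = (δ - 1) - 1 by ring, Real.rpow_sub_one htpos.ne']
      rw [hts]
      exact div_le_div_of_nonneg_left (Real.rpow_nonneg htpos.le _) htpos (by linarith)
    have heval2 : (∫ t in (1:ℝ)..χ, t ^ (δ - 2)) = (χ ^ (δ - 1) - 1) / (δ - 1) := by
      rw [integral_rpow (Or.inr ⟨by intro h; apply absurd h (by intro h'; nlinarith), ?_⟩)]
      · norm_num [show δ - 2 + 1 = δ - 1 by ring, Real.one_rpow]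
      · rw [Set.uIcc_of_le h1.le]
        intro hmem
        exact absurd hmem.1 (by norm_num)
    have hy : 0 < χ ^ (δ - 1) := Real.rpow_pos_of_pos hχ _
    have hfin2 : (χ ^ (δ - 1) - 1) / (δ - 1) ≤ 1 / (1 - δ) := by
      have hrw : (χ ^ (δ - 1) - 1) / (δ - 1) = (1 - χ ^ (δ - 1)) / (1 - δ) := by
        rw [div_eq_div_iff (by linarith) (by linarith : (0:ℝ) < 1 - δ).ne']
        ring
      rw [hrw, div_le_div_iff₀ (by linarith) (by linarith)]
      nlinarith
    have hB2 : (∫ t in (1:ℝ)..χ, t ^ (δ - 1) / (1 + t)) ≤ 1 / (1 - δ) :=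
      le_trans hmono2 (heval2 ▸ hfin2)
    linarith [hJ1 1 one_pos le_rfl]


lemma Ideriv {δ : ℝ} (hδ1 : 0 < δ) {x : ℝ} (hx : 0 < x) :
    HasDerivAt (fun χ => Ifun χ δ) (δ * (x ^ δ / (1 + x))) x := by
  have hmeas : StronglyMeasurableAtFilter (fun t : ℝ => t ^ δ / (1 + t)) (nhds x)
      MeasureTheory.volume := by
    refine ⟨Set.univ, Filter.univ_mem, ?_⟩
    apply Measurable.aestronglyMeasurable
    exact (measurable_id.pow_const δ).div (measurable_const.add measurable_id)
  have hcont : ContinuousAt (fun t : ℝ => t ^ δ / (1 + t)) x := by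
    apply ContinuousAt.div
    · exact Real.continuousAt_rpow_const x δ (Or.inr hδ1.le)
    · exact continuousAt_const.add continuousAt_id
    · positivity
  have h := (intervalIntegral.integral_hasDerivAt_right
    (int_f hδ1 le_rfl hx.le) hmeas hcont).const_mul δ
  simpa [Ifun] using h

end CGM

theorem correlation_global_max
    (δ a A : ℝ) (hδ : δ ∈ Set.Ioo (0:ℝ) 1) (ha : 0 < a) (hA : 0 < A)
    (B C ρ : ℝ → ℝ)
    (hB : ∀ χ, B χ = a * χ ^ δ)
    (hC : ∀ χ, C χ = a * Ifun χ δ)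
    (hρ : ∀ χ, 0 < χ → ρ χ =
      (Real.exp (B χ - C χ) - 1) /
        Real.sqrt ((Real.exp A - 1) * (Real.exp (B χ) - 1))) :
    ∃ χs : ℝ, 1 < χs ∧ (∀ χ, 0 < χ → ρ χ ≤ ρ χs) ∧
      (1 - χs) * Real.exp (B χs) + (1 + χs) * Real.exp (C χs) = 2 := by
  obtain ⟨hδ1, hδ2⟩ := hδ
  set M : ℝ := a / (1 - δ) with hM
  set F : ℝ → ℝ := fun χ =>
    (Real.exp (a * χ ^ δ - a * Ifun χ δ) - 1) ^ 2 / (Real.exp (a * χ ^ δ) - 1) with hFdef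
  have hFval : ∀ y : ℝ, F y =
      (Real.exp (a * y ^ δ - a * Ifun y δ) - 1) ^ 2 / (Real.exp (a * y ^ δ) - 1) :=
    fun y => rfl
  have hBpos : ∀ χ : ℝ, 0 < χ → 0 < a * χ ^ δ :=
    fun χ hχ => mul_pos ha (Real.rpow_pos_of_pos hχ δ)
  have hvpos : ∀ χ : ℝ, 0 < χ → 0 < Real.exp (a * χ ^ δ) - 1 := by
    intro χ hχ
    have := CGM.one_lt_exp' (hBpos χ hχ); linarith
  have hDpos : ∀ χ : ℝ, 0 < χ → 0 < a * χ ^ δ - a * Ifun χ δ := by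
    intro χ hχ
    have hrepr : a * χ ^ δ - a * Ifun χ δ =
        a * (δ * ∫ t in (0:ℝ)..χ, t ^ (δ - 1) / (1 + t)) := by
      rw [← mul_sub, CGM.key3 hδ1 hδ2 hχ]
    rw [hrepr]
    exact mul_pos ha (mul_pos hδ1 (CGM.Jpos hδ1 hδ2 hχ))
  have hupos : ∀ χ : ℝ, 0 < χ → 0 < Real.exp (a * χ ^ δ - a * Ifun χ δ) - 1 := by
    intro χ hχ
    have := CGM.one_lt_exp' (hDpos χ hχ); linarith
  have hDleB : ∀ χ : ℝ, 0 < χ → a * χ ^ δ - a * Ifun χ δ ≤ a * χ ^ δ := by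
    intro χ hχ
    have := mul_pos ha (CGM.Ipos hδ1 hχ)
    linarith
  have hDleM : ∀ χ : ℝ, 0 < χ → a * χ ^ δ - a * Ifun χ δ ≤ M := by
    intro χ hχ
    have hrepr : a * χ ^ δ - a * Ifun χ δ =
        a * (δ * ∫ t in (0:ℝ)..χ, t ^ (δ - 1) / (1 + t)) := by
      rw [← mul_sub, CGM.key3 hδ1 hδ2 hχ]
    rw [hrepr, hM]
    have hb := CGM.Jbound hδ1 hδ2 hχ
    have h1 : a * (δ * ∫ t in (0:ℝ)..χ, t ^ (δ - 1) / (1 + t)) ≤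
        a * (δ * (1 / δ + 1 / (1 - δ))) := by
      apply mul_le_mul_of_nonneg_left _ ha.le
      exact mul_le_mul_of_nonneg_left hb hδ1.le
    have h2 : a * (δ * (1 / δ + 1 / (1 - δ))) = a / (1 - δ) := by
      have h1δ : (1:ℝ) - δ ≠ 0 := by linarith
      field_simp
      ring
    linarith
  have hFpos : ∀ χ : ℝ, 0 < χ → 0 < F χ := by
    intro χ hχ
    rw [hFval]
    exact div_pos (pow_pos (hupos χ hχ) 2) (hvpos χ hχ)
  have hFle1 : ∀ χ : ℝ, 0 < χ → F χ ≤ Real.exp (a * χ ^ δ) - 1 := by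
    intro χ hχ
    rw [hFval, div_le_iff₀ (hvpos χ hχ)]
    have huv : Real.exp (a * χ ^ δ - a * Ifun χ δ) - 1 ≤ Real.exp (a * χ ^ δ) - 1 := by
      have := Real.exp_le_exp.2 (hDleB χ hχ); linarith
    nlinarith [hupos χ hχ, hvpos χ hχ]
  have hFle2 : ∀ χ : ℝ, 0 < χ →
      F χ ≤ Real.exp (2 * M) / (Real.exp (a * χ ^ δ) - 1) := by
    intro χ hχ
    rw [hFval]
    gcongr
    · exact (hvpos χ hχ).le
    have huM : Real.exp (a * χ ^ δ - a * Ifun χ δ) - 1 ≤ Real.exp M := by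
      have := Real.exp_le_exp.2 (hDleM χ hχ); linarith
    have h2M : Real.exp (2 * M) = Real.exp M * Real.exp M := by
      rw [two_mul, Real.exp_add]
    nlinarith [hupos χ hχ]
  have hFd : ∀ x : ℝ, 0 < x → HasDerivAt F
      ((2 * (Real.exp (a * x ^ δ - a * Ifun x δ) - 1) ^ 1 *
          (Real.exp (a * x ^ δ - a * Ifun x δ) *
            (a * (δ * x ^ (δ - 1)) - a * (δ * (x ^ δ / (1 + x))))) *
          (Real.exp (a * x ^ δ) - 1) -
        (Real.exp (a * x ^ δ - a * Ifun x δ) - 1) ^ 2 *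
          (Real.exp (a * x ^ δ) * (a * (δ * x ^ (δ - 1))))) /
        (Real.exp (a * x ^ δ) - 1) ^ 2) x := by
    intro x hx
    have hBd : HasDerivAt (fun χ : ℝ => a * χ ^ δ) (a * (δ * x ^ (δ - 1))) x :=
      (Real.hasDerivAt_rpow_const (Or.inl hx.ne')).const_mul a
    have hCd : HasDerivAt (fun χ : ℝ => a * Ifun χ δ) (a * (δ * (x ^ δ / (1 + x)))) x :=
      (CGM.Ideriv hδ1 hx).const_mul a
    have hnum := (((hBd.sub hCd).exp).sub_const 1).pow 2
    have hden := (hBd.exp).sub_const 1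
    have hdd := hnum.div hden (ne_of_gt (hvpos x hx))
    refine hdd.congr_deriv ?_
    norm_num
  have hF1 : 0 < F 1 := hFpos 1 one_pos
  -- behavior near 0
  have h0ev : ∀ᶠ χ in nhdsWithin 0 (Set.Ioi (0:ℝ)), F χ < F 1 := by
    have hc : ContinuousAt (fun χ : ℝ => Real.exp (a * χ ^ δ) - 1) 0 := by
      have h := Real.continuousAt_rpow_const 0 δ (Or.inr hδ1.le)
      exact ((Real.continuous_exp.continuousAt).comp (continuousAt_const.mul h)).sub
        continuousAt_const
    have ht : Filter.Tendsto (fun χ : ℝ => Real.exp (a * χ ^ δ) - 1)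
        (nhdsWithin 0 (Set.Ioi (0:ℝ))) (nhds 0) := by
      have h00 : Real.exp (a * (0:ℝ) ^ δ) - 1 = 0 := by
        simp [Real.zero_rpow hδ1.ne']
      simpa [h00] using hc.tendsto.mono_left nhdsWithin_le_nhds
    filter_upwards [ht.eventually_lt_const hF1, self_mem_nhdsWithin] with χ h1 h2
    exact lt_of_le_of_lt (hFle1 χ h2) h1
  obtain ⟨ε, hε, hεsub⟩ : ∃ ε ∈ Set.Ioi (0:ℝ), Set.Ioo 0 ε ⊆ {χ : ℝ | F χ < F 1} :=
    mem_nhdsGT_iff_exists_Ioo_subset.1 h0ev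
  -- behavior at infinity
  have hTopev : ∀ᶠ χ in Filter.atTop, F χ < F 1 := by
    have htB : Filter.Tendsto (fun χ : ℝ => Real.exp (a * χ ^ δ) - 1)
        Filter.atTop Filter.atTop := by
      have h1 := Real.tendsto_exp_atTop.comp
        ((tendsto_rpow_atTop hδ1).const_mul_atTop ha)
      simpa [sub_eq_add_neg, Function.comp] using
        Filter.tendsto_atTop_add_const_right Filter.atTop (-1) h1
    have ht2 : Filter.Tendsto
        (fun χ : ℝ => Real.exp (2 * M) / (Real.exp (a * χ ^ δ) - 1))
        Filter.atTop (nhds 0) := Filter.Tendsto.div_atTop tendsto_const_nhds htB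
    filter_upwards [ht2.eventually_lt_const hF1, Filter.eventually_gt_atTop 0] with χ h1 h2
    exact lt_of_le_of_lt (hFle2 χ h2) h1
  obtain ⟨R₀, hR₀⟩ := Filter.eventually_atTop.1 hTopev
  -- compact interval containing a global max
  set lo : ℝ := min (ε / 2) 1 with hlodef
  set hi : ℝ := max R₀ 1 with hhidef
  have hlopos : 0 < lo := lt_min (by simpa using half_pos (Set.mem_Ioi.1 hε)) one_pos
  have hlo1 : lo ≤ 1 := min_le_right _ _
  have hhi1 : 1 ≤ hi := le_max_right _ _
  have hcontIcc : ContinuousOn F (Set.Icc lo hi) := by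
    intro x hxmem
    exact ((hFd x (lt_of_lt_of_le hlopos hxmem.1)).differentiableAt.continuousAt).continuousWithinAt
  obtain ⟨χs, hχsmem, hχsmax⟩ :=
    isCompact_Icc.exists_isMaxOn ⟨1, hlo1, hhi1⟩ hcontIcc
  have hχs0 : 0 < χs := lt_of_lt_of_le hlopos hχsmem.1
  have hF1le : F 1 ≤ F χs := isMaxOn_iff.1 hχsmax 1 ⟨hlo1, hhi1⟩
  have hmaxall : ∀ χ : ℝ, 0 < χ → F χ ≤ F χs := by
    intro χ hχ
    rcases lt_or_ge χ lo with hl | hl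
    · have : χ ∈ Set.Ioo (0:ℝ) ε := ⟨hχ, by
        have := min_le_left (ε / 2) 1
        have : lo ≤ ε / 2 := this
        linarith⟩
      exact le_of_lt (lt_of_lt_of_le (hεsub this) hF1le)
    rcases le_or_gt χ hi with hh | hh
    · exact isMaxOn_iff.1 hχsmax χ ⟨hl, hh⟩
    · have hχR : R₀ ≤ χ := le_trans (le_max_left R₀ 1) hh.le
      exact le_of_lt (lt_of_lt_of_le (hR₀ χ hχR) hF1le)
  -- first-order condition at the interior maximum
  have hlocal : IsLocalMax F χs :=
    Filter.eventually_of_mem (isOpen_Ioi.mem_nhds hχs0) fun x hx => hmaxall x hx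
  have hzero := hlocal.hasDerivAt_eq_zero (hFd χs hχs0)
  rw [div_eq_zero_iff] at hzero
  have hnum0 := hzero.resolve_right (pow_ne_zero 2 (ne_of_gt (hvpos χs hχs0)))
  rw [sub_eq_zero] at hnum0
  set P : ℝ := Real.exp (a * χs ^ δ) with hPdef
  set Q : ℝ := Real.exp (a * Ifun χs δ) with hQdef
  set R : ℝ := Real.exp (a * χs ^ δ - a * Ifun χs δ) with hRdef
  set p : ℝ := a * (δ * χs ^ (δ - 1)) with hpdef
  set q : ℝ := a * (δ * (χs ^ δ / (1 + χs))) with hqdef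
  have hx1 : (0:ℝ) < 1 + χs := by linarith
  have hxd : χs ^ δ = χs ^ (δ - 1) * χs := by
    rw [← Real.rpow_add_one hχs0.ne', sub_add_cancel]
  have hq : q * (1 + χs) = p * χs := by
    rw [hqdef, hpdef, hxd]
    field_simp
  have hRQ : R * Q = P := by
    rw [hRdef, hQdef, hPdef, ← Real.exp_add]
    congr 1
    ring
  have hR1 : 1 < R := CGM.one_lt_exp' (hDpos χs hχs0)
  have hppos : 0 < p := mul_pos ha (mul_pos hδ1 (Real.rpow_pos_of_pos hχs0 _))
  have hPpos : 0 < P := Real.exp_pos _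
  have hcan : ((R - 1) * p) * (2 * R * (P - 1)) =
      ((R - 1) * p) * ((1 + χs) * (R - 1) * P) := by
    linear_combination (1 + χs) * hnum0 + 2 * (R - 1) * R * (P - 1) * hq
  have hE : 2 * R * (P - 1) = (1 + χs) * (R - 1) * P :=
    mul_left_cancel₀ (ne_of_gt (mul_pos (by linarith) hppos)) hcan
  have hcan2 : P * (2 * (P - 1)) = P * ((1 + χs) * (P - Q)) := by
    linear_combination Q * hE - (2 * (P - 1) - (1 + χs) * P) * hRQ
  have hfin : 2 * (P - 1) = (1 + χs) * (P - Q) :=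
    mul_left_cancel₀ (ne_of_gt hPpos) hcan2
  -- the maximizer exceeds 1
  have hQ1 : 1 < Q := CGM.one_lt_exp' (mul_pos ha (CGM.Ipos hδ1 hχs0))
  have hP1 : 1 < P := CGM.one_lt_exp' (hBpos χs hχs0)
  have hχs1 : 1 < χs := by
    by_contra hcon
    push_neg at hcon
    nlinarith [mul_nonneg (by linarith : (0:ℝ) ≤ 1 - χs) (by linarith : (0:ℝ) ≤ P - 1),
      mul_pos (by linarith : (0:ℝ) < 1 + χs) (by linarith : (0:ℝ) < Q - 1)]
  -- comparison for ρ
  have hA1 : 1 < Real.exp A := CGM.one_lt_exp' hA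
  have hrw : ∀ y : ℝ, 0 < y → ρ y = Real.sqrt (F y) / Real.sqrt (Real.exp A - 1) := by
    intro y hy
    rw [hρ y hy, hB, hC, hFval,
      Real.sqrt_div (sq_nonneg _), Real.sqrt_sq (hupos y hy).le,
      Real.sqrt_mul (by linarith : (0:ℝ) ≤ Real.exp A - 1), div_div,
      mul_comm (Real.sqrt (Real.exp A - 1)), ← div_div]
  have hρle : ∀ χ : ℝ, 0 < χ → ρ χ ≤ ρ χs := by
    intro χ hχ
    rw [hrw χ hχ, hrw χs hχs0]
    gcongr
    exact hmaxall χ hχ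
  refine ⟨χs, hχs1, hρle, ?_⟩
  rw [hB, hC]
  linear_combination hfin
end

section
/- Let n be a positive natural number, α > n a real number, δ = n/α, and let λ > 0, c > 0, σ > 0, η ≥ 0, γ > 0, ν > 0 be real numbers. Define, for r > 0, f_L(r) = log(1 + σ·r^{−α}) − log(1 + ν/γ) and f_R(r) = −λ·c·κ_δ·σ^δ − σ·η + λ·c·r^n − λ·c·σ^δ·I(r^α/σ, δ). Then there exists r > 0 with f_L(r) = f_R(r) if and only if log(1 + ν/γ) > σ·η; moreover, when it exists, this solution is unique. -/
open Real Filter Set MeasureTheory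

open Topology

lemma f_meas (δ : ℝ) : Measurable (fun t : ℝ => t ^ (δ - 1) / (1 + t)) := by fun_prop

lemma f_intOn_Ioc {δ : ℝ} (hδ0 : 0 < δ) (u : ℝ) :
    IntegrableOn (fun t : ℝ => t ^ (δ - 1) / (1 + t)) (Ioc 0 u) := by
  rcases le_or_gt u 0 with h | h
  · rw [Ioc_eq_empty (by exact fun hh => absurd (hh.trans_le h) (lt_irrefl 0))]
    exact integrableOn_empty
  · have hg : IntegrableOn (fun t : ℝ => t ^ (δ - 1)) (Ioc 0 u) :=
      (intervalIntegral.intervalIntegrable_rpow' (by linarith)).1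
    refine hg.integrable.mono ((f_meas δ).aestronglyMeasurable) ?_
    filter_upwards [ae_restrict_mem measurableSet_Ioc] with t ht
    have ht0 : 0 < t := ht.1
    have h1t : (1:ℝ) ≤ 1 + t := by linarith
    have hnn : 0 ≤ t ^ (δ - 1) := Real.rpow_nonneg ht0.le _
    rw [Real.norm_eq_abs, Real.norm_eq_abs, abs_of_nonneg (div_nonneg hnn (by linarith)),
      abs_of_nonneg hnn]
    exact div_le_self hnn h1t

lemma f_intOn_Ioi {δ : ℝ} (hδ0 : 0 < δ) (hδ1 : δ < 1) :
    IntegrableOn (fun t : ℝ => t ^ (δ - 1) / (1 + t)) (Ioi 0) := by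
  have h1 := f_intOn_Ioc hδ0 1
  have h2 : IntegrableOn (fun t : ℝ => t ^ (δ - 1) / (1 + t)) (Ioi 1) := by
    have hg : IntegrableOn (fun t : ℝ => t ^ (δ - 2)) (Ioi 1) :=
      integrableOn_Ioi_rpow_of_lt (by linarith) one_pos
    refine hg.integrable.mono ((f_meas δ).aestronglyMeasurable) ?_
    filter_upwards [ae_restrict_mem measurableSet_Ioi] with t ht
    have ht0 : (0:ℝ) < t := lt_trans one_pos ht
    have hnn : 0 ≤ t ^ (δ - 1) := Real.rpow_nonneg ht0.le _
    have hnn2 : 0 ≤ t ^ (δ - 2) := Real.rpow_nonneg ht0.le _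
    rw [Real.norm_eq_abs, Real.norm_eq_abs, abs_of_nonneg (div_nonneg hnn (by linarith)),
      abs_of_nonneg hnn2]
    have : t ^ (δ - 1) / (1 + t) ≤ t ^ (δ - 1) / t :=
      div_le_div_of_nonneg_left hnn ht0 (by linarith)
    refine this.trans_eq ?_
    rw [show δ - 2 = (δ - 1) - 1 by ring, Real.rpow_sub ht0 (δ-1) 1, Real.rpow_one]
  have := h1.union h2
  rwa [Ioc_union_Ioi_eq_Ioi zero_le_one] at this

lemma Ifun_eq {δ : ℝ} (hδ0 : 0 < δ) (hδ1 : δ < 1) {u : ℝ} (hu : 0 ≤ u) :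
    Ifun u δ = u ^ δ - δ * ∫ t in (0:ℝ)..u, t ^ (δ - 1) / (1 + t) := by
  have hii1 : IntervalIntegrable (fun t : ℝ => t ^ (δ - 1)) volume 0 u :=
    intervalIntegral.intervalIntegrable_rpow' (by linarith)
  have hii2 : IntervalIntegrable (fun t : ℝ => t ^ (δ - 1) / (1 + t)) volume 0 u :=
    (intervalIntegrable_iff_integrableOn_Ioc_of_le hu).mpr (f_intOn_Ioc hδ0 u)
  have hcong : (∫ t in (0:ℝ)..u, t ^ δ / (1 + t))
      = ∫ t in (0:ℝ)..u, (t ^ (δ - 1) - t ^ (δ - 1) / (1 + t)) := by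
    apply intervalIntegral.integral_congr
    intro t ht
    rw [uIcc_of_le hu] at ht
    rcases eq_or_lt_of_le ht.1 with h0 | h0
    · simp [← h0, Real.zero_rpow hδ0.ne', Real.zero_rpow (show δ - 1 ≠ 0 by linarith)]
    · have h1t : (0:ℝ) < 1 + t := by linarith
      have htδ : t ^ δ = t ^ (δ - 1) * t := by
        rw [← Real.rpow_add_one h0.ne']; ring_nf
      simp only []
      rw [htδ]
      field_simp
      ring
  rw [Ifun, hcong, intervalIntegral.integral_sub hii1 hii2,
    integral_rpow (Or.inl (by linarith : (-1:ℝ) < δ - 1))]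
  rw [show δ - 1 + 1 = δ by ring, Real.zero_rpow hδ0.ne']
  field_simp
  ring

theorem optimal_guard_zone_exists_iff_unique
    (n : ℕ) (hn : 0 < n) (α : ℝ) (hα : (n : ℝ) < α) (δ : ℝ) (hδ : δ = (n : ℝ) / α)
    (lam c σ η γ ν : ℝ) (hlam : 0 < lam) (hc : 0 < c) (hσ : 0 < σ) (hη : 0 ≤ η)
    (hγ : 0 < γ) (hν : 0 < ν)
    (fL fR : ℝ → ℝ)
    (hfL : ∀ r, 0 < r → fL r = Real.log (1 + σ * r ^ (-α)) - Real.log (1 + ν / γ))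
    (hfR : ∀ r, 0 < r → fR r =
      -(lam * c * kappa δ * σ ^ δ) - σ * η + lam * c * r ^ (n : ℝ)
        - lam * c * σ ^ δ * Ifun (r ^ α / σ) δ) :
    ((∃ r, 0 < r ∧ fL r = fR r) ↔ σ * η < Real.log (1 + ν / γ)) ∧
    (∀ r₁ r₂, 0 < r₁ → 0 < r₂ → fL r₁ = fR r₁ → fL r₂ = fR r₂ → r₁ = r₂) := by
  have hn0 : (0:ℝ) < (n:ℝ) := by exact_mod_cast hn
  have hα0 : (0:ℝ) < α := lt_trans hn0 hα
  have hδ0 : 0 < δ := by rw [hδ]; positivity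
  have hδ1 : δ < 1 := by rw [hδ]; exact (div_lt_one hα0).mpr hα
  set J : ℝ → ℝ := fun u => ∫ t in (0:ℝ)..u, t ^ (δ - 1) / (1 + t) with hJdef
  set K : ℝ := ∫ t in Set.Ioi (0:ℝ), t ^ (δ - 1) / (1 + t) with hKdef
  set L : ℝ := Real.log (1 + ν / γ) with hLdef
  have hL : 0 < L := Real.log_pos (by rw [lt_add_iff_pos_right]; positivity)
  set A : ℝ := lam * c * σ ^ δ with hAdef
  have hA : 0 < A := by rw [hAdef]; positivity
  set F : ℝ → ℝ := fun r =>
    Real.log (1 + σ * r ^ (-α)) + (σ * η - L) + A * δ * (K - J (r ^ α / σ)) with hFdef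
  have hD : IntegrableOn (fun t : ℝ => t ^ (δ - 1) / (1 + t)) (Ioi 0) := f_intOn_Ioi hδ0 hδ1
  -- the key reformulation
  have hF : ∀ r, 0 < r → fL r - fR r = F r := by
    intro r hr
    have hu : (0:ℝ) ≤ r ^ α / σ := by positivity
    have hαδ : α * δ = (n:ℝ) := by rw [hδ]; field_simp
    have hσδ : σ ^ δ * (r ^ α / σ) ^ δ = r ^ (n:ℝ) := by
      rw [Real.div_rpow (Real.rpow_nonneg hr.le α) hσ.le, ← Real.rpow_mul hr.le, hαδ]
      field_simp
    rw [hfL r hr, hfR r hr, Ifun_eq hδ0 hδ1 hu, kappa]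
    have hJr : (∫ t in (0:ℝ)..(r ^ α / σ), t ^ (δ - 1) / (1 + t)) = J (r ^ α / σ) := rfl
    simp only [hFdef, hAdef, hLdef, hKdef]
    rw [hJr]
    linear_combination lam * c * hσδ
  -- J is monotone on [0, ∞) and bounded by K
  have hJle : ∀ u₁ u₂ : ℝ, 0 ≤ u₁ → u₁ ≤ u₂ → J u₁ ≤ J u₂ := by
    intro u₁ u₂ hu1 h12
    have h1 : IntervalIntegrable (fun t : ℝ => t ^ (δ - 1) / (1 + t)) volume 0 u₁ :=
      (intervalIntegrable_iff_integrableOn_Ioc_of_le hu1).mpr (f_intOn_Ioc hδ0 u₁)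
    have h2 : IntervalIntegrable (fun t : ℝ => t ^ (δ - 1) / (1 + t)) volume u₁ u₂ :=
      (intervalIntegrable_iff_integrableOn_Ioc_of_le h12).mpr
        ((f_intOn_Ioc hδ0 u₂).mono_set (Ioc_subset_Ioc_left hu1))
    have hadd := intervalIntegral.integral_add_adjacent_intervals h1 h2
    have hnn : 0 ≤ ∫ t in u₁..u₂, t ^ (δ - 1) / (1 + t) := by
      apply intervalIntegral.integral_nonneg h12
      intro t ht
      have ht0 : 0 ≤ t := le_trans hu1 ht.1
      positivity
    have : J u₂ = J u₁ + ∫ t in u₁..u₂, t ^ (δ - 1) / (1 + t) := by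
      rw [hJdef]; exact hadd.symm
    linarith
  have hJK : ∀ u : ℝ, 0 ≤ u → J u ≤ K := by
    intro u hu
    have : J u = ∫ t in Ioc (0:ℝ) u, t ^ (δ - 1) / (1 + t) := by
      rw [hJdef]; exact intervalIntegral.integral_of_le hu
    rw [this, hKdef]
    apply setIntegral_mono_set hD
    · filter_upwards [ae_restrict_mem measurableSet_Ioi] with t ht
      have : (0:ℝ) < t := ht
      positivity
    · exact HasSubset.Subset.eventuallyLE Ioc_subset_Ioi_self
  -- strict antitonicity of F on (0, ∞)
  have hstrict : ∀ r₁ r₂ : ℝ, 0 < r₁ → r₁ < r₂ → F r₂ < F r₁ := by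
    intro r₁ r₂ h1 h12
    have h2 : 0 < r₂ := lt_trans h1 h12
    have hrp : r₁ ^ α < r₂ ^ α := Real.rpow_lt_rpow h1.le h12 hα0
    have hrp1 : 0 < r₁ ^ α := Real.rpow_pos_of_pos h1 α
    have hlog : Real.log (1 + σ * r₂ ^ (-α)) < Real.log (1 + σ * r₁ ^ (-α)) := by
      apply Real.log_lt_log
      · have : 0 < r₂ ^ (-α) := Real.rpow_pos_of_pos h2 _
        positivity
      · have hinv : r₂ ^ (-α) < r₁ ^ (-α) := by
          rw [Real.rpow_neg h1.le, Real.rpow_neg h2.le]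
          exact inv_strictAnti₀ hrp1 hrp
        have := mul_lt_mul_of_pos_left hinv hσ
        linarith
    have hJ : J (r₁ ^ α / σ) ≤ J (r₂ ^ α / σ) := by
      apply hJle _ _ (by positivity)
      apply div_le_div_of_nonneg_right hrp.le hσ.le
    have hAδ : 0 ≤ A * δ := by positivity
    simp only [hFdef]
    nlinarith [mul_le_mul_of_nonneg_left (sub_le_sub_left hJ K) hAδ]
  -- forward direction
  have hfwd : (∃ r, 0 < r ∧ fL r = fR r) → σ * η < L := by
    rintro ⟨r, hr, hre⟩
    have hFr : F r = 0 := by rw [← hF r hr, hre, sub_self]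
    have hlogpos : 0 < Real.log (1 + σ * r ^ (-α)) := by
      apply Real.log_pos
      have : 0 < r ^ (-α) := Real.rpow_pos_of_pos hr _
      nlinarith
    have hnn : 0 ≤ A * δ * (K - J (r ^ α / σ)) :=
      mul_nonneg (by positivity) (sub_nonneg.mpr (hJK _ (by positivity)))
    simp only [hFdef] at hFr
    linarith
  -- backward direction: existence
  have hbwd : σ * η < L → ∃ r, 0 < r ∧ fL r = fR r := by
    intro hlt
    have hnear : ∀ᶠ r in 𝓝[>] (0:ℝ), 0 < F r ∧ 0 < r := by
      have hinv : Tendsto (fun r : ℝ => (r⁻¹) ^ α) (𝓝[>] (0:ℝ)) atTop :=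
        (tendsto_rpow_atTop hα0).comp tendsto_inv_nhdsGT_zero
      have heq : ∀ᶠ r in 𝓝[>] (0:ℝ), (r⁻¹) ^ α = r ^ (-α) := by
        filter_upwards [self_mem_nhdsWithin] with r hr
        rw [Real.rpow_neg (le_of_lt hr), ← Real.inv_rpow (le_of_lt hr)]
      have h1 : Tendsto (fun r : ℝ => r ^ (-α)) (𝓝[>] (0:ℝ)) atTop :=
        hinv.congr' heq
      have h2 : Tendsto (fun r : ℝ => 1 + σ * r ^ (-α)) (𝓝[>] (0:ℝ)) atTop :=
        tendsto_atTop_add_const_left _ 1 (h1.const_mul_atTop hσ)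
      have h3 : Tendsto (fun r : ℝ => Real.log (1 + σ * r ^ (-α))) (𝓝[>] (0:ℝ)) atTop :=
        Real.tendsto_log_atTop.comp h2
      filter_upwards [h3.eventually_gt_atTop (L - σ * η), self_mem_nhdsWithin]
        with r hrL hr0
      have hrpos : (0:ℝ) < r := hr0
      refine ⟨?_, hrpos⟩
      have hnn : 0 ≤ A * δ * (K - J (r ^ α / σ)) :=
        mul_nonneg (by positivity)
          (sub_nonneg.mpr (hJK _ (by positivity)))
      simp only [hFdef]
      linarith
    obtain ⟨a, hFa, ha0⟩ := hnear.exists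
    have hlim : Tendsto F atTop (𝓝 (σ * η - L)) := by
      have h1 : Tendsto (fun r : ℝ => Real.log (1 + σ * r ^ (-α))) atTop (𝓝 0) := by
        have hb : Tendsto (fun r : ℝ => 1 + σ * r ^ (-α)) atTop (𝓝 (1 + σ * 0)) :=
          tendsto_const_nhds.add ((tendsto_rpow_neg_atTop hα0).const_mul σ)
        rw [mul_zero, add_zero] at hb
        have := (Real.continuousAt_log one_ne_zero).tendsto.comp hb
        simpa [Function.comp_def] using this
      have h2 : Tendsto (fun r : ℝ => J (r ^ α / σ)) atTop (𝓝 K) := by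
        rw [hJdef, hKdef]
        exact intervalIntegral_tendsto_integral_Ioi 0 hD
          ((tendsto_rpow_atTop hα0).atTop_div_const hσ)
      have h3 : Tendsto F atTop (𝓝 (0 + (σ * η - L) + A * δ * (K - K))) := by
        simp only [hFdef]
        exact (h1.add tendsto_const_nhds).add ((tendsto_const_nhds.sub h2).const_mul (A * δ))
      simpa using h3
    have hbev : ∀ᶠ r in atTop, F r < 0 ∧ a ≤ r := by
      filter_upwards [hlim.eventually_lt_const (by linarith : σ * η - L < 0),
        eventually_ge_atTop a] with r ha hb
      exact ⟨ha, hb⟩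
    obtain ⟨b, hFb, hab⟩ := hbev.exists
    have hb0 : 0 < b := lt_of_lt_of_le ha0 hab
    have hMnn : (0:ℝ) ≤ b ^ α / σ := by positivity
    have hJcont : ContinuousOn J (Icc 0 (b ^ α / σ)) := by
      have hint : IntegrableOn (fun t : ℝ => t ^ (δ - 1) / (1 + t))
          (uIcc (0:ℝ) (b ^ α / σ)) := by
        rw [uIcc_of_le hMnn, integrableOn_Icc_iff_integrableOn_Ioc]
        exact f_intOn_Ioc hδ0 _
      have := intervalIntegral.continuousOn_primitive_interval hint
      rwa [uIcc_of_le hMnn] at this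
    have hrpowcont : ContinuousOn (fun r : ℝ => r ^ (-α)) (Icc a b) := by
      intro x hx
      have hx0 : 0 < x := lt_of_lt_of_le ha0 hx.1
      exact (Real.continuousAt_rpow_const x (-α) (Or.inl hx0.ne')).continuousWithinAt
    have hlogcont : ContinuousOn (fun r : ℝ => Real.log (1 + σ * r ^ (-α))) (Icc a b) := by
      apply ContinuousOn.log (continuousOn_const.add (continuousOn_const.mul hrpowcont))
      intro x hx
      have hx0 : 0 < x := lt_of_lt_of_le ha0 hx.1
      have : 0 < x ^ (-α) := Real.rpow_pos_of_pos hx0 _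
      exact ne_of_gt (by positivity : (0:ℝ) < 1 + σ * x ^ (-α))
    have hinnercont : ContinuousOn (fun r : ℝ => r ^ α / σ) (Icc a b) := by
      apply ContinuousOn.div_const
      intro x hx
      have hx0 : 0 < x := lt_of_lt_of_le ha0 hx.1
      exact (Real.continuousAt_rpow_const x α (Or.inl hx0.ne')).continuousWithinAt
    have hmaps : MapsTo (fun r : ℝ => r ^ α / σ) (Icc a b) (Icc 0 (b ^ α / σ)) := by
      intro x hx
      have hx0 : 0 < x := lt_of_lt_of_le ha0 hx.1
      constructor
      · positivity
      · exact div_le_div_of_nonneg_right (Real.rpow_le_rpow hx0.le hx.2 hα0.le) hσ.le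
    have hcont : ContinuousOn F (Icc a b) := by
      simp only [hFdef]
      exact (hlogcont.add continuousOn_const).add
        (continuousOn_const.mul
          (continuousOn_const.sub (hJcont.comp hinnercont hmaps)))
    have h0mem : (0:ℝ) ∈ Icc (F b) (F a) := ⟨hFb.le, hFa.le⟩
    obtain ⟨r, hrmem, hFr⟩ := intermediate_value_Icc' hab hcont h0mem
    have hr0 : 0 < r := lt_of_lt_of_le ha0 hrmem.1
    refine ⟨r, hr0, ?_⟩
    have hd := hF r hr0
    rw [hFr] at hd
    linarith [sub_eq_zero.mp hd]
  constructor
  · exact ⟨hfwd, hbwd⟩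
  · intro r₁ r₂ h1 h2 he1 he2
    have hF1 : F r₁ = 0 := by rw [← hF r₁ h1, he1, sub_self]
    have hF2 : F r₂ = 0 := by rw [← hF r₂ h2, he2, sub_self]
    rcases lt_trichotomy r₁ r₂ with h | h | h
    · exact absurd (hstrict r₁ r₂ h1 h) (by rw [hF1, hF2]; exact lt_irrefl 0)
    · exact h
    · exact absurd (hstrict r₂ r₁ h2 h) (by rw [hF1, hF2]; exact lt_irrefl 0)
end

section
/- Let n be a positive natural number, α > n a real number, δ = n/α, and let λ > 0, c > 0, σ > 0, η ≥ 0 be real numbers. Let c₀₀, c₀₁, c₁₀, c₁₁ ≥ 0 satisfy c₁₀ > c₀₀ and c₀₁ > c₁₁. Define A = λ·c·κ_δ·σ^δ + σ·η, B(r) = λ·c·r^n, C(r) = λ·c·σ^δ·I(r^α/σ, δ), and the Bayes risk R(r) = c₀₀ + (c₀₁ − c₀₀)·e^{−A} + (c₁₀ − c₀₀)·e^{−B(r)} + (c₁₁ + c₀₀ − c₁₀ − c₀₁)·e^{−A−C(r)} for r > 0. Then R is quasiconvex on (0,∞). -/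
open Real Filter Set MeasureTheory

set_option maxHeartbeats 1000000

theorem bayes_risk_quasiconvex
    (n : ℕ) (hn : 0 < n) (α : ℝ) (hα : (n : ℝ) < α) (δ : ℝ) (hδ : δ = (n : ℝ) / α)
    (lam c σ η : ℝ) (hlam : 0 < lam) (hc : 0 < c) (hσ : 0 < σ) (hη : 0 ≤ η)
    (c00 c01 c10 c11 : ℝ) (hc00 : 0 ≤ c00) (hc01 : 0 ≤ c01) (hc10 : 0 ≤ c10) (hc11 : 0 ≤ c11)
    (h10 : c00 < c10) (h01 : c11 < c01)
    (A : ℝ) (B C R : ℝ → ℝ)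
    (hA : A = lam * c * kappa δ * σ ^ δ + σ * η)
    (hB : ∀ r, B r = lam * c * r ^ (n : ℝ))
    (hC : ∀ r, C r = lam * c * σ ^ δ * Ifun (r ^ α / σ) δ)
    (hR : ∀ r, R r = c00 + (c01 - c00) * Real.exp (-A) + (c10 - c00) * Real.exp (-(B r))
        + (c11 + c00 - c10 - c01) * Real.exp (-A - C r)) :
    QuasiconvexOn ℝ (Set.Ioi (0:ℝ)) R := by
  have hn0 : (0:ℝ) < (n:ℝ) := by exact_mod_cast hn
  have hα0 : (0:ℝ) < α := lt_of_le_of_lt (Nat.cast_nonneg n) hα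
  have hδ0 : 0 < δ := by rw [hδ]; positivity
  have hδα : δ * α = (n:ℝ) := by rw [hδ]; field_simp
  set K : ℝ := lam * c with hK
  have hK0 : 0 < K := mul_pos hlam hc
  set u : ℝ → ℝ := fun r => r ^ α / σ with hu
  set w : ℝ → ℝ := fun r => u r / (1 + u r) with hw
  set Bd : ℝ → ℝ := fun r => K * ((n:ℝ) * r ^ ((n:ℝ) - 1)) with hBdef
  set hfun : ℝ → ℝ := fun r =>
    (c10 + c01 - c00 - c11) * Real.exp (B r - A - C r) * w r - (c10 - c00) with hhdef
  set ρ : ℝ → ℝ := fun r => Bd r * Real.exp (-(B r)) * hfun r with hρdef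
  -- basic positivity facts
  have hu0 : ∀ r : ℝ, 0 < r → 0 < u r := by
    intro r hr
    simp only [hu]
    positivity
  have h1u : ∀ r : ℝ, 0 < r → 0 < 1 + u r := fun r hr => by linarith [hu0 r hr]
  have hw0 : ∀ r : ℝ, 0 < r → 0 < w r := by
    intro r hr
    exact div_pos (hu0 r hr) (h1u r hr)
  have hw1 : ∀ r : ℝ, 0 < r → w r ≤ 1 := by
    intro r hr
    rw [hw]
    exact (div_le_one (h1u r hr)).2 (by linarith)
  have hBd0 : ∀ r : ℝ, 0 < r → 0 < Bd r := by
    intro r hr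
    simp only [hBdef]
    have := Real.rpow_pos_of_pos hr ((n:ℝ) - 1)
    positivity
  -- continuity of the integrand
  set f : ℝ → ℝ := fun t => t ^ δ / (1 + t) with hfdef
  have hfc : ∀ t : ℝ, -1 < t → ContinuousAt f t := by
    intro t ht
    have h1 : ContinuousAt (fun t : ℝ => t ^ δ) t :=
      Real.continuousAt_rpow_const t δ (Or.inr hδ0.le)
    have h2 : ContinuousAt (fun t : ℝ => 1 + t) t := by fun_prop
    exact h1.div h2 (by linarith)
  -- FTC
  have hFder : ∀ v : ℝ, 0 < v → HasDerivAt (fun x => ∫ t in (0:ℝ)..x, f t) (f v) v := by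
    intro v hv
    have hint : IntervalIntegrable f volume 0 v := by
      apply ContinuousOn.intervalIntegrable
      intro t ht
      rw [Set.uIcc_of_le hv.le] at ht
      exact (hfc t (by linarith [ht.1])).continuousWithinAt
    have hmeas := ContinuousOn.stronglyMeasurableAtFilter (μ := volume)
      (isOpen_Ioi (a := (-1:ℝ)))
      (fun t ht => (hfc t ht).continuousWithinAt) v (by simp; linarith)
    exact intervalIntegral.integral_hasDerivAt_right hint hmeas (hfc v (by linarith))
  -- derivative of B
  have hBder : ∀ r : ℝ, 0 < r → HasDerivAt B (Bd r) r := by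
    intro r hr
    have h1 := (Real.hasDerivAt_rpow_const (x := r) (p := (n:ℝ)) (Or.inl hr.ne')).const_mul K
    have hBeq : B = fun s : ℝ => K * s ^ (n:ℝ) := funext fun s => hB s
    rw [hBeq, hBdef]
    exact h1
  -- derivative of C
  have hCder : ∀ r : ℝ, 0 < r → HasDerivAt C (Bd r * w r) r := by
    intro r hr
    have hur : 0 < u r := hu0 r hr
    have hrα : HasDerivAt (fun s : ℝ => s ^ α / σ) (α * r ^ (α - 1) / σ) r :=
      (Real.hasDerivAt_rpow_const (x := r) (p := α) (Or.inl hr.ne')).div_const σ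
    have h1 : HasDerivAt (fun s : ℝ => ∫ t in (0:ℝ)..(s ^ α / σ), f t)
        (f (u r) * (α * r ^ (α - 1) / σ)) r := (hFder (u r) hur).comp r hrα
    have h2 : HasDerivAt C (K * σ ^ δ * δ * (f (u r) * (α * r ^ (α - 1) / σ))) r := by
      have h3 := (h1.const_mul δ).const_mul (K * σ ^ δ)
      have hCeq : C = fun s : ℝ => K * σ ^ δ * (δ * ∫ t in (0:ℝ)..(s ^ α / σ), f t) := by
        funext s; rw [hC s, Ifun]
      rw [hCeq]
      exact h3.congr_deriv (by ring)
    convert h2 using 1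
    -- algebraic identity: Bd r * w r = K σ^δ δ f(u r) (α r^{α-1}/σ)
    have hσδ : (0:ℝ) < σ ^ δ := Real.rpow_pos_of_pos hσ δ
    have e1 : (u r) ^ δ = r ^ (n:ℝ) / σ ^ δ := by
      rw [hu]
      rw [Real.div_rpow (Real.rpow_nonneg hr.le α) hσ.le]
      congr 1
      rw [← Real.rpow_mul hr.le, mul_comm α δ, hδα]
    have e2 : r ^ (α - 1) = r ^ α / r := by
      rw [Real.rpow_sub hr, Real.rpow_one]
    have e3 : r ^ ((n:ℝ) - 1) = r ^ (n:ℝ) / r := by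
      rw [Real.rpow_sub hr, Real.rpow_one]
    have h1u' : (0:ℝ) < 1 + r ^ α / σ := by positivity
    have main : ∀ y xσ P : ℝ, 0 < P →
        K * ((n:ℝ) * (y / r)) * (xσ / σ / P) =
          K * σ ^ δ * δ * (y / σ ^ δ / P * (α * (xσ / r) / σ)) := by
      intro y xσ P hP
      rw [← hδα]
      field_simp
    simp only [hu] at e1
    simp only [hfdef, hBdef, hw, hu, e1, e2, e3]
    exact main (r ^ (n:ℝ)) (r ^ α) (1 + r ^ α / σ) h1u'
  -- derivative of R
  have hRder : ∀ r : ℝ, 0 < r → HasDerivAt R (ρ r) r := by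
    intro r hr
    have h1 : HasDerivAt (fun s : ℝ => Real.exp (-(B s)))
        (Real.exp (-(B r)) * -(Bd r)) r := ((hBder r hr).neg).exp
    have h2 : HasDerivAt (fun s : ℝ => Real.exp (-A - C s))
        (Real.exp (-A - C r) * -(Bd r * w r)) r := ((hCder r hr).const_sub (-A)).exp
    have h3 : HasDerivAt R ((c10 - c00) * (Real.exp (-(B r)) * -(Bd r))
        + (c11 + c00 - c10 - c01) * (Real.exp (-A - C r) * -(Bd r * w r))) r := by
      have hReq : R = fun s : ℝ => c00 + (c01 - c00) * Real.exp (-A)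
          + (c10 - c00) * Real.exp (-(B s))
          + (c11 + c00 - c10 - c01) * Real.exp (-A - C s) := funext hR
      rw [hReq]
      exact ((h1.const_mul (c10 - c00)).const_add
        (c00 + (c01 - c00) * Real.exp (-A))).add (h2.const_mul (c11 + c00 - c10 - c01))
    convert h3 using 1
    have hexp : Real.exp (-(B r)) * Real.exp (B r - A - C r) = Real.exp (-A - C r) := by
      rw [← Real.exp_add]; ring_nf
    simp only [hρdef, hhdef]
    linear_combination ((c10 + c01 - c00 - c11) * Bd r * w r) * hexp
  -- monotonicity of B - C on Ioi 0
  have hBC : MonotoneOn (fun r => B r - C r) (Set.Ioi (0:ℝ)) := by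
    apply monotoneOn_of_deriv_nonneg (convex_Ioi 0)
    · intro t ht
      exact ((hBder t ht).sub (hCder t ht)).continuousAt.continuousWithinAt
    · rw [interior_Ioi]
      intro t ht
      exact ((hBder t ht).sub (hCder t ht)).differentiableAt.differentiableWithinAt
    · rw [interior_Ioi]
      intro t ht
      rw [HasDerivAt.deriv (f := fun r => B r - C r) ((hBder t ht).sub (hCder t ht))]
      have h1 := hBd0 t ht
      have h2 := hw1 t ht
      nlinarith
  -- w is monotone
  have hwm : ∀ r s : ℝ, 0 < r → r ≤ s → w r ≤ w s := by
    intro r s hr hrs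
    have hs : 0 < s := lt_of_lt_of_le hr hrs
    have hus : u r ≤ u s := by
      simp only [hu]
      exact div_le_div_of_nonneg_right (Real.rpow_le_rpow hr.le hrs hα0.le) hσ.le
    rw [hw, div_le_div_iff₀ (h1u r hr) (h1u s hs)]
    nlinarith [hu0 r hr]
  -- the set where hfun is nonnegative is upward closed
  have hup : ∀ r s : ℝ, 0 < r → r ≤ s → 0 ≤ hfun r → 0 ≤ hfun s := by
    intro r s hr hrs hhr
    have hs : 0 < s := lt_of_lt_of_le hr hrs
    have hEr : 0 < Real.exp (B r - A - C r) := Real.exp_pos _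
    have hEs : 0 < Real.exp (B s - A - C s) := Real.exp_pos _
    have hE : Real.exp (B r - A - C r) ≤ Real.exp (B s - A - C s) := by
      apply Real.exp_le_exp.2
      have := hBC (Set.mem_Ioi.2 hr) (Set.mem_Ioi.2 hs) hrs
      simp only at this
      linarith
    have hwrs := hwm r s hr hrs
    have hwr := hw0 r hr
    have hd : 0 < c10 + c01 - c00 - c11 := by
      by_contra hcon
      push_neg at hcon
      simp only [hhdef] at hhr
      nlinarith
    have hprod : Real.exp (B r - A - C r) * w r ≤ Real.exp (B s - A - C s) * w s :=
      mul_le_mul hE hwrs hwr.le hEs.le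
    simp only [hhdef] at hhr ⊢
    nlinarith
  -- key inequality
  have key : ∀ x y p : ℝ, 0 < x → x ≤ p → p ≤ y → R p ≤ max (R x) (R y) := by
    intro x y p hx hxp hpy
    have hp : 0 < p := lt_of_lt_of_le hx hxp
    by_cases hcase : hfun p < 0
    · have hanti : AntitoneOn R (Set.Icc x p) := by
        apply antitoneOn_of_deriv_nonpos (convex_Icc x p)
        · intro t ht
          exact (hRder t (lt_of_lt_of_le hx ht.1)).continuousAt.continuousWithinAt
        · rw [interior_Icc]
          intro t ht
          exact (hRder t (lt_trans hx ht.1)).differentiableAt.differentiableWithinAt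
        · rw [interior_Icc]
          intro t ht
          have ht0 : 0 < t := lt_trans hx ht.1
          rw [(hRder t ht0).deriv]
          have hht : hfun t ≤ 0 := by
            by_contra hcon
            push_neg at hcon
            exact absurd (hup t p ht0 ht.2.le hcon.le) (not_le.2 hcase)
          have hpos : 0 < Bd t * Real.exp (-(B t)) :=
            mul_pos (hBd0 t ht0) (Real.exp_pos _)
          simp only [hρdef]
          exact mul_nonpos_of_nonneg_of_nonpos hpos.le hht
      exact le_max_of_le_left
        (hanti (Set.mem_Icc.2 ⟨le_refl x, hxp⟩) (Set.mem_Icc.2 ⟨hxp, le_refl p⟩) hxp)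
    · push_neg at hcase
      have hmono : MonotoneOn R (Set.Icc p y) := by
        apply monotoneOn_of_deriv_nonneg (convex_Icc p y)
        · intro t ht
          exact (hRder t (lt_of_lt_of_le hp ht.1)).continuousAt.continuousWithinAt
        · rw [interior_Icc]
          intro t ht
          exact (hRder t (lt_trans hp ht.1)).differentiableAt.differentiableWithinAt
        · rw [interior_Icc]
          intro t ht
          have ht0 : 0 < t := lt_trans hp ht.1
          rw [(hRder t ht0).deriv]
          have hht : 0 ≤ hfun t := hup p t hp ht.1.le hcase
          have hpos : 0 < Bd t * Real.exp (-(B t)) :=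
            mul_pos (hBd0 t ht0) (Real.exp_pos _)
          simp only [hρdef]
          positivity
      exact le_max_of_le_right
        (hmono (Set.mem_Icc.2 ⟨le_refl p, hpy⟩) (Set.mem_Icc.2 ⟨hpy, le_refl y⟩) hpy)
  rw [quasiconvexOn_iff_le_max]
  refine ⟨convex_Ioi 0, ?_⟩
  intro x hx y hy a b ha hb hab
  simp only [smul_eq_mul]
  rw [Set.mem_Ioi] at hx hy
  rcases le_total x y with hxy | hyx
  · have h1 : x ≤ a * x + b * y := by nlinarith
    have h2 : a * x + b * y ≤ y := by nlinarith
    exact key x y _ hx h1 h2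
  · have h1 : y ≤ a * x + b * y := by nlinarith
    have h2 : a * x + b * y ≤ x := by nlinarith
    rw [max_comm]
    exact key y x _ hy h1 h2
end

section
/- Let n be a positive natural number, α > n a real number, δ = n/α, and let λ > 0, c > 0, σ > 0, η ≥ 0 be real numbers. Let c₀₀, c₀₁, c₁₀, c₁₁ ≥ 0 satisfy c₁₀ > c₀₀ and c₀₁ > c₁₁. Define A = λ·c·κ_δ·σ^δ + σ·η, B(r) = λ·c·r^n, C(r) = λ·c·σ^δ·I(r^α/σ, δ), and R(r) = c₀₀ + (c₀₁ − c₀₀)·e^{−A} + (c₁₀ − c₀₀)·e^{−B(r)} + (c₁₁ + c₀₀ − c₁₀ − c₀₁)·e^{−A−C(r)} for r > 0. If r* > 0 is a stationary point of R (i.e., the derivative of R vanishes at r*), then R(r*) = c₀₀ + (c₀₁ − c₀₀)·e^{−A} − (c₁₀ − c₀₀)·(σ/(r*)^α)·e^{−B(r*)}. -/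
open Real Filter Set MeasureTheory

lemma ftc_aux (δ u0 : ℝ) (hδ : 0 < δ) (hu0 : 0 < u0) :
    HasDerivAt (fun u => ∫ t in (0:ℝ)..u, t ^ δ / (1 + t)) (u0 ^ δ / (1 + u0)) u0 := by
  have hcont : Continuous fun t : ℝ => t ^ δ :=
    continuous_iff_continuousAt.mpr fun x => Real.continuousAt_rpow_const x δ (Or.inr hδ.le)
  have hconOn : ContinuousOn (fun t : ℝ => t ^ δ / (1 + t)) (Set.Ioi (-1 : ℝ)) := by
    apply hcont.continuousOn.div (by fun_prop)
    intro x hx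
    simp only [Set.mem_Ioi] at hx
    linarith
  have hint : IntervalIntegrable (fun t : ℝ => t ^ δ / (1 + t)) volume 0 u0 := by
    apply ContinuousOn.intervalIntegrable
    apply hconOn.mono
    rw [Set.uIcc_of_le hu0.le]
    intro x hx
    simp only [Set.mem_Icc] at hx
    simp only [Set.mem_Ioi]
    linarith [hx.1]
  exact intervalIntegral.integral_hasDerivAt_right hint
    (hconOn.stronglyMeasurableAtFilter isOpen_Ioi u0 (by simpa using hu0.trans' (by norm_num)))
    (hconOn.continuousAt (isOpen_Ioi.mem_nhds (by simp; linarith)))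

lemma alg_aux (lam c σ δ α rs X Y S nn : ℝ) (hσ : 0 < σ) (hrs : 0 < rs)
    (hY : 0 < Y) (hS : 0 < S) (hαδ : α * δ = nn) :
    lam * c * (nn * X) =
      lam * c * S * (δ * ((X * rs / S) / ((σ + Y * rs) / σ)) * (α * Y / σ)) *
        (1 + σ / (Y * rs)) := by
  have h1 : σ + Y * rs ≠ 0 := by positivity
  field_simp
  linear_combination (-(lam * c * X * (σ + rs * Y))) * hαδ

theorem bayes_risk_at_stationary_point
    (n : ℕ) (hn : 0 < n) (α : ℝ) (hα : (n : ℝ) < α) (δ : ℝ) (hδ : δ = (n : ℝ) / α)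
    (lam c σ η : ℝ) (hlam : 0 < lam) (hc : 0 < c) (hσ : 0 < σ) (hη : 0 ≤ η)
    (c00 c01 c10 c11 : ℝ) (hc00 : 0 ≤ c00) (hc01 : 0 ≤ c01) (hc10 : 0 ≤ c10) (hc11 : 0 ≤ c11)
    (h10 : c00 < c10) (h01 : c11 < c01)
    (A : ℝ) (B C R : ℝ → ℝ)
    (hA : A = lam * c * kappa δ * σ ^ δ + σ * η)
    (hB : ∀ r, B r = lam * c * r ^ (n : ℝ))
    (hC : ∀ r, C r = lam * c * σ ^ δ * Ifun (r ^ α / σ) δ)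
    (hR : ∀ r, R r = c00 + (c01 - c00) * Real.exp (-A) + (c10 - c00) * Real.exp (-(B r))
        + (c11 + c00 - c10 - c01) * Real.exp (-A - C r))
    (rs : ℝ) (hrs : 0 < rs) (hstat : HasDerivAt R 0 rs) :
    R rs = c00 + (c01 - c00) * Real.exp (-A)
        - (c10 - c00) * (σ / rs ^ α) * Real.exp (-(B rs)) := by
  have hnpos : (0:ℝ) < (n:ℝ) := by exact_mod_cast hn
  have hαpos : 0 < α := hnpos.trans hα
  have hαne : α ≠ 0 := hαpos.ne'
  have hδpos : 0 < δ := by rw [hδ]; positivity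
  have hrsne : rs ≠ 0 := hrs.ne'
  have hP : 0 < rs ^ α := Real.rpow_pos_of_pos hrs α
  set u0 : ℝ := rs ^ α / σ with hu0def
  have hu0 : 0 < u0 := div_pos hP hσ
  set b' : ℝ := lam * c * ((n:ℝ) * rs ^ ((n:ℝ) - 1)) with hb'def
  set c' : ℝ := lam * c * σ ^ δ * (δ * (u0 ^ δ / (1 + u0)) * (α * rs ^ (α - 1) / σ)) with hc'def
  -- derivative of B
  have hBder : HasDerivAt B b' rs := by
    have hBf : B = fun r : ℝ => lam * c * r ^ ((n:ℝ)) := funext hB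
    rw [hBf, hb'def]
    exact (Real.hasDerivAt_rpow_const (Or.inl hrsne)).const_mul (lam * c)
  -- derivative of C
  have hCder : HasDerivAt C c' rs := by
    have hg : HasDerivAt (fun r : ℝ => r ^ α / σ) (α * rs ^ (α - 1) / σ) rs :=
      (Real.hasDerivAt_rpow_const (Or.inl hrsne)).div_const σ
    have hF : HasDerivAt (fun u => δ * ∫ t in (0:ℝ)..u, t ^ δ / (1 + t))
        (δ * (u0 ^ δ / (1 + u0))) u0 := (ftc_aux δ u0 hδpos hu0).const_mul δ
    have hcomp := (hF.comp rs hg).const_mul (lam * c * σ ^ δ)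
    have hCe : C = fun r => lam * c * σ ^ δ *
        (δ * ∫ t in (0:ℝ)..(r ^ α / σ), t ^ δ / (1 + t)) := by
      funext r; rw [hC r, Ifun]
    rw [hCe, hc'def]
    exact hcomp
  set K : ℝ := c11 + c00 - c10 - c01 with hKdef
  set eB : ℝ := Real.exp (-(B rs)) with heBdef
  set eAC : ℝ := Real.exp (-A - C rs) with heACdef
  -- derivative of R and stationarity
  have hRe : R = fun r => c00 + (c01 - c00) * Real.exp (-A) + (c10 - c00) * Real.exp (-(B r))
      + K * Real.exp (-A - C r) := funext hR
  have hRder : HasDerivAt R ((c10 - c00) * (eB * (-b')) + K * (eAC * (-c'))) rs := by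
    rw [hRe]
    have h := ((hasDerivAt_const rs (c00 + (c01 - c00) * Real.exp (-A))).add
      ((hBder.neg.exp).const_mul (c10 - c00))).add
      (((hasDerivAt_const rs (-A)).sub hCder).exp.const_mul K)
    exact h.congr_deriv (by simp only [Pi.neg_apply, Pi.sub_apply]; ring)
  have hzero : (c10 - c00) * (eB * (-b')) + K * (eAC * (-c')) = 0 := hRder.unique hstat
  -- positivity of c'
  have hσδ : (0:ℝ) < σ ^ δ := Real.rpow_pos_of_pos hσ δ
  have hc'pos : 0 < c' := by
    rw [hc'def]
    have h1 : 0 < u0 ^ δ := Real.rpow_pos_of_pos hu0 δ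
    have h2 : 0 < 1 + u0 := by linarith
    have h3 : 0 < rs ^ (α - 1) := Real.rpow_pos_of_pos hrs _
    positivity
  -- key algebraic identity
  have hαδ : α * δ = (n:ℝ) := by rw [hδ]; field_simp
  have hu0δ : u0 ^ δ = rs ^ ((n:ℝ)) / σ ^ δ := by
    rw [hu0def, Real.div_rpow hP.le hσ.le, ← Real.rpow_mul hrs.le, hαδ]
  have h1u0 : 1 + u0 = (σ + rs ^ α) / σ := by rw [hu0def]; field_simp
  have hrn : rs ^ ((n:ℝ)) = rs ^ ((n:ℝ) - 1) * rs := by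
    rw [Real.rpow_sub_one hrsne]; field_simp
  have hrα : rs ^ α = rs ^ (α - 1) * rs := by
    rw [Real.rpow_sub_one hrsne]; field_simp
  have hY : 0 < rs ^ (α - 1) := Real.rpow_pos_of_pos hrs _
  have hkey : b' = c' * (1 + σ / rs ^ α) := by
    rw [hb'def, hc'def, hu0δ, h1u0, hrn, hrα]
    exact alg_aux lam c σ δ α rs (rs ^ ((n:ℝ) - 1)) (rs ^ (α - 1)) (σ ^ δ) (n:ℝ)
      hσ hrs hY hσδ hαδ
  -- conclude
  have heACval : K * eAC = -((c10 - c00) * eB * b') / c' := by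
    rw [eq_div_iff hc'pos.ne']
    linear_combination -hzero
  rw [hR rs]
  have hfin : K * eAC = -((c10 - c00) * eB * (1 + σ / rs ^ α)) := by
    rw [heACval, hkey,
      show (c10 - c00) * eB * (c' * (1 + σ / rs ^ α))
        = ((c10 - c00) * eB * (1 + σ / rs ^ α)) * c' by ring,
      neg_div, mul_div_cancel_right₀ _ hc'pos.ne']
  rw [hfin]
  ring
end

section
/- Let δ ∈ (0,1). Then for every χ ≥ 0, (1 + χ)·(κ_δ + I(χ,δ)) − χ^{δ+1} > 0. -/
open Real Filter Set MeasureTheory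

lemma aux_integrableOn (δ : ℝ) (h0 : 0 < δ) (h1 : δ < 1) :
    IntegrableOn (fun t : ℝ => t ^ (δ - 1) / (1 + t)) (Set.Ioi 0) := by
  have hcont : ContinuousOn (fun t : ℝ => t ^ (δ - 1) / (1 + t)) (Set.Ioi 0) := by
    apply ContinuousOn.div
    · exact (continuousOn_id.rpow_const fun t ht => Or.inl (ne_of_gt ht))
    · exact (continuous_const.add continuous_id).continuousOn
    · intro t ht; have := mem_Ioi.mp ht; positivity
  have hmeas : AEStronglyMeasurable (fun t : ℝ => t ^ (δ - 1) / (1 + t))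
      (volume.restrict (Set.Ioi (0:ℝ))) :=
    hcont.aestronglyMeasurable measurableSet_Ioi
  have hsplit : Set.Ioi (0:ℝ) = Set.Ioc 0 1 ∪ Set.Ioi 1 :=
    (Set.Ioc_union_Ioi_eq_Ioi (by norm_num)).symm
  rw [hsplit]
  apply IntegrableOn.union
  · have hdom : IntegrableOn (fun t : ℝ => t ^ (δ - 1)) (Set.Ioc (0:ℝ) 1) := by
      have := intervalIntegral.intervalIntegrable_rpow' (a := (0:ℝ)) (b := 1)
        (r := δ - 1) (by linarith)
      rwa [intervalIntegrable_iff_integrableOn_Ioc_of_le (by norm_num)] at this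
    refine hdom.integrable.mono' (hmeas.mono_set (by rw [hsplit]; exact Set.subset_union_left)) ?_
    filter_upwards [ae_restrict_mem measurableSet_Ioc] with t ht
    have ht0 : 0 < t := ht.1
    have h1t : (1:ℝ) ≤ 1 + t := by linarith
    rw [Real.norm_eq_abs, abs_div, abs_of_nonneg (Real.rpow_nonneg ht0.le _),
      abs_of_pos (by linarith : (0:ℝ) < 1 + t)]
    calc t ^ (δ - 1) / (1 + t) ≤ t ^ (δ - 1) / 1 :=
          div_le_div_of_nonneg_left (Real.rpow_nonneg ht0.le _) one_pos h1t
      _ = t ^ (δ - 1) := by ring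
  · have hdom : IntegrableOn (fun t : ℝ => t ^ (δ - 2)) (Set.Ioi (1:ℝ)) :=
      integrableOn_Ioi_rpow_of_lt (by linarith) one_pos
    refine hdom.integrable.mono' (hmeas.mono_set (by rw [hsplit]; exact Set.subset_union_right)) ?_
    filter_upwards [ae_restrict_mem measurableSet_Ioi] with t ht
    have ht1 : (1:ℝ) < t := ht
    have ht0 : 0 < t := by linarith
    rw [Real.norm_eq_abs, abs_div, abs_of_nonneg (Real.rpow_nonneg ht0.le _),
      abs_of_pos (by linarith : (0:ℝ) < 1 + t)]
    have key : t ^ (δ - 2) = t ^ (δ - 1) / t := by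
      rw [show δ - 2 = (δ - 1) - 1 by ring, Real.rpow_sub ht0, Real.rpow_one]
    rw [key]
    exact div_le_div_of_nonneg_left (Real.rpow_nonneg ht0.le _) ht0 (by linarith)

theorem sensitivity_sigma_factor_pos
    (δ : ℝ) (hδ : δ ∈ Set.Ioo (0:ℝ) 1) :
    ∀ χ : ℝ, 0 ≤ χ → 0 < (1 + χ) * (kappa δ + Ifun χ δ) - χ ^ (δ + 1) := by
  obtain ⟨h0, h1⟩ := hδ
  have hint := aux_integrableOn δ h0 h1
  have hδne : δ ≠ 0 := ne_of_gt h0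
  have hf_nonneg : 0 ≤ᵐ[volume.restrict (Set.Ioi (0:ℝ))]
      fun t : ℝ => t ^ (δ - 1) / (1 + t) := by
    filter_upwards [ae_restrict_mem measurableSet_Ioi] with t ht
    have : (0:ℝ) < t := ht
    positivity
  -- kappa is positive
  have hkpos : 0 < kappa δ := by
    have hI1 : IntervalIntegrable (fun t : ℝ => t ^ (δ - 1) / (1 + t)) volume 0 1 := by
      rw [intervalIntegrable_iff_integrableOn_Ioc_of_le (by norm_num)]
      exact hint.mono_set Set.Ioc_subset_Ioi_self
    have hpos01 : 0 < ∫ t in (0:ℝ)..1, t ^ (δ - 1) / (1 + t) := by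
      apply intervalIntegral.intervalIntegral_pos_of_pos_on hI1 _ one_pos
      intro x hx
      have hx0 : 0 < x := hx.1
      have : (0:ℝ) < 1 + x := by linarith
      positivity
    have hle : (∫ t in Set.Ioc (0:ℝ) 1, t ^ (δ - 1) / (1 + t)) ≤
        ∫ t in Set.Ioi (0:ℝ), t ^ (δ - 1) / (1 + t) := by
      apply setIntegral_mono_set hint hf_nonneg
      exact HasSubset.Subset.eventuallyLE Set.Ioc_subset_Ioi_self
    rw [intervalIntegral.integral_of_le (by norm_num : (0:ℝ) ≤ 1)] at hpos01
    have : 0 < ∫ t in Set.Ioi (0:ℝ), t ^ (δ - 1) / (1 + t) := lt_of_lt_of_le hpos01 hle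
    exact mul_pos h0 this
  intro χ hχ
  rcases eq_or_lt_of_le hχ with rfl | hχ0
  · simp only [Ifun, intervalIntegral.integral_same, mul_zero, add_zero,
      Real.zero_rpow (by linarith : δ + 1 ≠ 0), sub_zero, zero_add, one_mul]
    exact hkpos
  -- main case χ > 0
  have hA_int : IntervalIntegrable (fun t : ℝ => t ^ (δ - 1) / (1 + t)) volume 0 χ := by
    rw [intervalIntegrable_iff_integrableOn_Ioc_of_le hχ]
    exact hint.mono_set Set.Ioc_subset_Ioi_self
  have hB_int : IntervalIntegrable (fun t : ℝ => t ^ δ / (1 + t)) volume 0 χ := by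
    apply ContinuousOn.intervalIntegrable
    apply ContinuousOn.div
    · exact fun x hx => (Real.continuousAt_rpow_const x δ (Or.inr h0.le)).continuousWithinAt
    · exact (continuous_const.add continuous_id).continuousOn
    · intro x hx
      rw [Set.uIcc_of_le hχ] at hx
      have := hx.1; positivity
  -- sum of integrals equals χ^δ/δ
  have hsum : (∫ t in (0:ℝ)..χ, t ^ (δ - 1) / (1 + t)) +
      (∫ t in (0:ℝ)..χ, t ^ δ / (1 + t)) = χ ^ δ / δ := by
    rw [← intervalIntegral.integral_add hA_int hB_int]
    have heq : Set.EqOn (fun t : ℝ => t ^ (δ - 1) / (1 + t) + t ^ δ / (1 + t))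
        (fun t : ℝ => t ^ (δ - 1)) (Set.uIcc 0 χ) := by
      intro t ht
      rw [Set.uIcc_of_le hχ] at ht
      rcases eq_or_lt_of_le ht.1 with rfl | ht0
      · simp [Real.zero_rpow (by linarith : δ - 1 ≠ 0), Real.zero_rpow hδne]
      · have h1t : (0:ℝ) < 1 + t := by linarith
        have : t ^ δ = t ^ (δ - 1) * t := by
          rw [← Real.rpow_add_one (ne_of_gt ht0)]; ring_nf
        simp only
        rw [this, ← add_div]
        field_simp
    rw [intervalIntegral.integral_congr heq,
      integral_rpow (Or.inl (by linarith : (-1:ℝ) < δ - 1))]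
    rw [sub_add_cancel, Real.zero_rpow hδne]
    ring_nf
  -- kappa ≥ δ * A
  have hkA : δ * (∫ t in (0:ℝ)..χ, t ^ (δ - 1) / (1 + t)) ≤ kappa δ := by
    apply mul_le_mul_of_nonneg_left _ h0.le
    rw [intervalIntegral.integral_of_le hχ]
    apply setIntegral_mono_set hint hf_nonneg
    exact HasSubset.Subset.eventuallyLE Set.Ioc_subset_Ioi_self
  -- conclude
  have hmain : χ ^ δ ≤ kappa δ + Ifun χ δ := by
    have : χ ^ δ = δ * (χ ^ δ / δ) := by field_simp
    rw [this, ← hsum, mul_add]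
    unfold Ifun
    linarith
  have hχδ : 0 < χ ^ δ := Real.rpow_pos_of_pos hχ0 δ
  have hrw : χ ^ (δ + 1) = χ ^ δ * χ := by
    rw [Real.rpow_add_one (ne_of_gt hχ0)]
  have h1χ : (0:ℝ) < 1 + χ := by linarith
  have : (1 + χ) * χ ^ δ ≤ (1 + χ) * (kappa δ + Ifun χ δ) :=
    mul_le_mul_of_nonneg_left hmain h1χ.le
  nlinarith
end

section
/- Let n be a positive natural number, α > n a real number, δ = n/α, and let q > 0 and r₀ > 0 be real numbers. Then n·∫_{r₀}^∞ (1 − e^{−q·r^{−α}})·r^{n−1} dr = −r₀^n + q^δ·Γ(1−δ) + r₀^n·δ·E(1+δ, q·r₀^{−α}), where Γ is the Gamma function and E(v,u) = ∫₁^∞ e^{−u·t}·t^{−v} dt. -/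
open Real Filter Set MeasureTheory

/-- Generalized exponential integral `E(v,u) = ∫₁^∞ e^{-u·t} t^{-v} dt`. -/
noncomputable def genExpInt (v u : ℝ) : ℝ := ∫ t in Set.Ioi (1:ℝ), Real.exp (-(u * t)) * t ^ (-v)

lemma aux_integrable_exp_rpow (u b : ℝ) (hu : 0 < u) (hb : b ≤ 0) :
    IntegrableOn (fun t : ℝ => Real.exp (-(u * t)) * t ^ b) (Set.Ioi (1:ℝ)) := by
  apply Integrable.mono' (g := fun t : ℝ => Real.exp (-u * t))
  · exact exp_neg_integrableOn_Ioi 1 hu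
  · apply ContinuousOn.aestronglyMeasurable _ measurableSet_Ioi
    apply ContinuousOn.mul
    · exact (Continuous.rexp (by continuity)).continuousOn
    · exact fun x hx => (Real.continuousAt_rpow_const x b (Or.inl (ne_of_gt (lt_trans one_pos hx)))).continuousWithinAt
  · filter_upwards [ae_restrict_mem measurableSet_Ioi] with t ht
    have ht1 : (1:ℝ) ≤ t := le_of_lt ht
    have h1 : t ^ b ≤ 1 := Real.rpow_le_one_of_one_le_of_nonpos ht1 hb
    have h2 : (0:ℝ) ≤ t ^ b := Real.rpow_nonneg (by linarith) b
    rw [Real.norm_eq_abs, abs_of_nonneg (by positivity)]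
    calc Real.exp (-(u * t)) * t ^ b ≤ Real.exp (-(u * t)) * 1 := by
          exact mul_le_mul_of_nonneg_left h1 (Real.exp_nonneg _)
      _ = Real.exp (-u * t) := by rw [mul_one, neg_mul]

/-- Integration by parts for the generalized exponential integral. -/
lemma genExpInt_parts {u δ : ℝ} (hu : 0 < u) (hδ : 0 < δ) :
    δ * genExpInt (1 + δ) u + u * genExpInt δ u = Real.exp (-u) := by
  have key : ∫ t in Set.Ioi (1:ℝ),
      (u * (Real.exp (-(u * t)) * t ^ (-δ)) + δ * (Real.exp (-(u * t)) * t ^ (-(1+δ))))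
      = Real.exp (-u) := by
    have hderiv : ∀ x ∈ Set.Ici (1:ℝ), HasDerivAt (fun t : ℝ => -(Real.exp (-(u * t)) * t ^ (-δ)))
        (u * (Real.exp (-(u * x)) * x ^ (-δ)) + δ * (Real.exp (-(u * x)) * x ^ (-(1+δ)))) x := by
      intro x hx
      have hx0 : (0:ℝ) < x := lt_of_lt_of_le one_pos hx
      have h1 : HasDerivAt (fun t : ℝ => Real.exp (-(u * t))) (Real.exp (-(u * x)) * (-u)) x := by
        have : HasDerivAt (fun t : ℝ => -(u * t)) (-u) x := by
          simpa using ((hasDerivAt_id x).const_mul u).fun_neg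
        exact this.exp
      have h2 : HasDerivAt (fun t : ℝ => t ^ (-δ)) (-δ * x ^ (-δ - 1)) x :=
        Real.hasDerivAt_rpow_const (Or.inl hx0.ne')
      have := (h1.mul h2).neg
      refine this.congr_deriv ?_
      have hexp : x ^ (-(1+δ)) = x ^ (-δ - 1) := by ring_nf
      rw [hexp]; ring
    have hint1 : IntegrableOn (fun t : ℝ => Real.exp (-(u * t)) * t ^ (-δ)) (Set.Ioi 1) :=
      aux_integrable_exp_rpow u (-δ) hu (by linarith)
    have hint2 : IntegrableOn (fun t : ℝ => Real.exp (-(u * t)) * t ^ (-(1+δ))) (Set.Ioi 1) :=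
      aux_integrable_exp_rpow u (-(1+δ)) hu (by linarith)
    have hintsum : IntegrableOn (fun t : ℝ =>
        u * (Real.exp (-(u * t)) * t ^ (-δ)) + δ * (Real.exp (-(u * t)) * t ^ (-(1+δ))))
        (Set.Ioi 1) := (hint1.const_mul u).add (hint2.const_mul δ)
    have htend : Tendsto (fun t : ℝ => -(Real.exp (-(u * t)) * t ^ (-δ))) atTop (nhds 0) := by
      have h1 : Tendsto (fun t : ℝ => Real.exp (-(u * t))) atTop (nhds 0) := by
        have hm : Tendsto (fun t : ℝ => u * t) atTop atTop := tendsto_id.const_mul_atTop hu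
        have := tendsto_exp_neg_atTop_nhds_zero.comp hm
        simpa [Function.comp_def] using this
      have h2 : Tendsto (fun t : ℝ => t ^ (-δ)) atTop (nhds 0) := tendsto_rpow_neg_atTop hδ
      simpa using (h1.mul h2).neg
    have := integral_Ioi_of_hasDerivAt_of_tendsto' hderiv hintsum htend
    rw [this]
    simp [Real.rpow_natCast]
  rw [MeasureTheory.integral_add ((aux_integrable_exp_rpow u (-δ) hu (by linarith)).const_mul u)
      ((aux_integrable_exp_rpow u (-(1+δ)) hu (by linarith)).const_mul δ),
    integral_const_mul, integral_const_mul] at key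
  unfold genExpInt
  linarith [key]

/-- Scaling for the tail integral. -/
lemma tail_integral_eq (u δ : ℝ) (hu : 0 < u) :
    ∫ x in Set.Ioi u, Real.exp (-x) * x ^ (-δ) = u ^ (1 - δ) * genExpInt δ u := by
  have h := MeasureTheory.integral_comp_mul_left_Ioi
    (fun x : ℝ => Real.exp (-x) * x ^ (-δ)) 1 hu
  rw [mul_one] at h
  have h2 : ∀ t ∈ Set.Ioi (1:ℝ), Real.exp (-(u * t)) * (u * t) ^ (-δ)
      = u ^ (-δ) * (Real.exp (-(u * t)) * t ^ (-δ)) := by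
    intro t ht
    rw [Real.mul_rpow hu.le (le_of_lt (lt_trans one_pos ht))]
    ring
  rw [MeasureTheory.setIntegral_congr_fun measurableSet_Ioi (fun t ht => h2 t ht)] at h
  rw [integral_const_mul] at h
  have : ∫ x in Set.Ioi u, Real.exp (-x) * x ^ (-δ)
      = u * (u ^ (-δ) * genExpInt δ u) := by
    rw [genExpInt]
    rw [smul_eq_mul] at h
    field_simp at h ⊢
    rw [← h]
  rw [this, ← mul_assoc]
  congr 1
  rw [Real.rpow_sub hu, Real.rpow_one, Real.rpow_neg hu.le, div_eq_mul_inv]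

/-- Splitting the Gamma integral at `u`. -/
lemma gamma_split {δ u : ℝ} (hδ1 : δ < 1) (hu : 0 < u) :
    ∫ x in Set.Ioo (0:ℝ) u, Real.exp (-x) * x ^ (-δ)
      = Real.Gamma (1 - δ) - ∫ x in Set.Ioi u, Real.exp (-x) * x ^ (-δ) := by
  have hexp : (1:ℝ) - δ - 1 = -δ := by ring
  have hconv : IntegrableOn (fun x : ℝ => Real.exp (-x) * x ^ (-δ)) (Set.Ioi 0) := by
    have := Real.GammaIntegral_convergent (show (0:ℝ) < 1 - δ by linarith)
    rwa [hexp] at this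
  have hgam : Real.Gamma (1 - δ) = ∫ x in Set.Ioi (0:ℝ), Real.exp (-x) * x ^ (-δ) := by
    rw [Real.Gamma_eq_integral (show (0:ℝ) < 1 - δ by linarith), hexp]
  have hsplit : ∫ x in Set.Ioi (0:ℝ), Real.exp (-x) * x ^ (-δ)
      = (∫ x in Set.Ioo (0:ℝ) u, Real.exp (-x) * x ^ (-δ))
        + ∫ x in Set.Ici u, Real.exp (-x) * x ^ (-δ) := by
    rw [← Set.Ioo_union_Ici_eq_Ioi hu]
    apply MeasureTheory.setIntegral_union _ measurableSet_Ici
    · exact hconv.mono_set (Set.Ioo_subset_Ioi_self)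
    · exact hconv.mono_set (fun x hx => lt_of_lt_of_le hu hx)
    · exact Set.disjoint_left.mpr fun x hx hx' => absurd hx' (not_le.mpr hx.2)
  rw [MeasureTheory.integral_Ici_eq_integral_Ioi] at hsplit
  rw [hgam, hsplit]
  ring

theorem interference_integral_identity
    (n : ℕ) (hn : 0 < n) (α : ℝ) (hα : (n : ℝ) < α) (δ : ℝ) (hδ : δ = (n : ℝ) / α)
    (q r₀ : ℝ) (hq : 0 < q) (hr₀ : 0 < r₀) :
    (n : ℝ) * ∫ r in Set.Ioi r₀, (1 - Real.exp (-(q * r ^ (-α)))) * r ^ ((n : ℝ) - 1) =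
      -(r₀ ^ (n : ℝ)) + q ^ δ * Real.Gamma (1 - δ)
        + r₀ ^ (n : ℝ) * δ * genExpInt (1 + δ) (q * r₀ ^ (-α)) := by
  have hn0 : (0:ℝ) < (n:ℝ) := by exact_mod_cast hn
  have hα0 : (0:ℝ) < α := lt_trans hn0 hα
  have hδ0 : 0 < δ := by rw [hδ]; positivity
  have hδ1 : δ < 1 := by rw [hδ, div_lt_one hα0]; exact hα
  have hαδ : α * δ = (n:ℝ) := by rw [hδ]; field_simp
  set u₀ : ℝ := q * r₀ ^ (-α) with hu₀def
  have hu₀ : 0 < u₀ := by positivity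
  -- continuity of pieces on Ioi r₀
  have hrpow : ∀ (b : ℝ), ContinuousOn (fun r : ℝ => r ^ b) (Set.Ioi r₀) := by
    intro b x hx
    exact (Real.continuousAt_rpow_const x b
      (Or.inl (ne_of_gt (lt_trans hr₀ hx)))).continuousWithinAt
  have hcexp : ContinuousOn (fun r : ℝ => Real.exp (-(q * r ^ (-α)))) (Set.Ioi r₀) :=
    ((continuousOn_const.mul (hrpow (-α))).neg).rexp
  -- integrability of the two pieces
  have I1 : IntegrableOn
      (fun r : ℝ => (1 - Real.exp (-(q * r ^ (-α)))) * r ^ ((n:ℝ) - 1)) (Set.Ioi r₀) := by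
    apply Integrable.mono' (g := fun r : ℝ => q * r ^ ((n:ℝ) - 1 - α))
    · exact (integrableOn_Ioi_rpow_of_lt (by linarith) hr₀).const_mul q
    · exact ((continuousOn_const.sub hcexp).mul (hrpow ((n:ℝ) - 1))).aestronglyMeasurable
        measurableSet_Ioi
    · filter_upwards [ae_restrict_mem measurableSet_Ioi] with r hr
      have hr0 : (0:ℝ) < r := lt_trans hr₀ hr
      have hy0 : (0:ℝ) ≤ q * r ^ (-α) := by positivity
      have hle1 : Real.exp (-(q * r ^ (-α))) ≤ 1 :=
        Real.exp_le_one_iff.mpr (by linarith)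
      have hle2 : 1 - Real.exp (-(q * r ^ (-α))) ≤ q * r ^ (-α) := by
        have := Real.add_one_le_exp (-(q * r ^ (-α)))
        linarith
      rw [Real.norm_eq_abs, abs_of_nonneg
        (mul_nonneg (by linarith) (Real.rpow_nonneg hr0.le _))]
      calc (1 - Real.exp (-(q * r ^ (-α)))) * r ^ ((n:ℝ) - 1)
          ≤ (q * r ^ (-α)) * r ^ ((n:ℝ) - 1) :=
            mul_le_mul_of_nonneg_right hle2 (Real.rpow_nonneg hr0.le _)
        _ = q * r ^ ((n:ℝ) - 1 - α) := by
            rw [show (n:ℝ) - 1 - α = -α + ((n:ℝ) - 1) by ring, Real.rpow_add hr0]; ring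
  have I2 : IntegrableOn
      (fun r : ℝ => Real.exp (-(q * r ^ (-α))) * r ^ ((n:ℝ) - α - 1)) (Set.Ioi r₀) := by
    apply Integrable.mono' (g := fun r : ℝ => r ^ ((n:ℝ) - α - 1))
    · exact integrableOn_Ioi_rpow_of_lt (by linarith) hr₀
    · exact (hcexp.mul (hrpow ((n:ℝ) - α - 1))).aestronglyMeasurable measurableSet_Ioi
    · filter_upwards [ae_restrict_mem measurableSet_Ioi] with r hr
      have hr0 : (0:ℝ) < r := lt_trans hr₀ hr
      have hle1 : Real.exp (-(q * r ^ (-α))) ≤ 1 :=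
        Real.exp_le_one_iff.mpr (neg_nonpos.mpr (by positivity))
      rw [Real.norm_eq_abs, abs_of_nonneg (by positivity)]
      nlinarith [Real.rpow_nonneg hr0.le ((n:ℝ) - α - 1)]
  -- integration by parts on the original integral
  have hderiv : ∀ x ∈ Set.Ici r₀, HasDerivAt
      (fun r : ℝ => (1 - Real.exp (-(q * r ^ (-α)))) * r ^ (n:ℝ))
      ((n:ℝ) * ((1 - Real.exp (-(q * x ^ (-α)))) * x ^ ((n:ℝ) - 1))
        - q * α * (Real.exp (-(q * x ^ (-α))) * x ^ ((n:ℝ) - α - 1))) x := by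
    intro x hx
    have hx0 : (0:ℝ) < x := lt_of_lt_of_le hr₀ hx
    have hA : HasDerivAt (fun r : ℝ => r ^ (-α)) (-α * x ^ (-α - 1)) x :=
      Real.hasDerivAt_rpow_const (Or.inl hx0.ne')
    have hB : HasDerivAt (fun r : ℝ => -(q * r ^ (-α))) (-(q * (-α * x ^ (-α - 1)))) x :=
      (hA.const_mul q).neg
    have hC := hB.exp
    have hD := (hasDerivAt_const x (1:ℝ)).sub hC
    have hE : HasDerivAt (fun r : ℝ => r ^ (n:ℝ)) ((n:ℝ) * x ^ ((n:ℝ) - 1)) x :=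
      Real.hasDerivAt_rpow_const (Or.inl hx0.ne')
    have := hD.mul hE
    refine this.congr_deriv ?_
    rw [show (n:ℝ) - α - 1 = (-α - 1) + (n:ℝ) by ring, Real.rpow_add hx0]
    simp only [Pi.sub_apply]; ring
  have htend : Tendsto (fun r : ℝ => (1 - Real.exp (-(q * r ^ (-α)))) * r ^ (n:ℝ))
      atTop (nhds 0) := by
    apply squeeze_zero' (g := fun r : ℝ => q * r ^ ((n:ℝ) - α))
    · filter_upwards [eventually_gt_atTop (0:ℝ)] with r hr0
      have hle1 : Real.exp (-(q * r ^ (-α))) ≤ 1 :=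
        Real.exp_le_one_iff.mpr (neg_nonpos.mpr (by positivity))
      have := Real.rpow_nonneg hr0.le (n:ℝ)
      nlinarith
    · filter_upwards [eventually_gt_atTop (0:ℝ)] with r hr0
      have hle2 : 1 - Real.exp (-(q * r ^ (-α))) ≤ q * r ^ (-α) := by
        have := Real.add_one_le_exp (-(q * r ^ (-α)))
        linarith
      calc (1 - Real.exp (-(q * r ^ (-α)))) * r ^ (n:ℝ)
          ≤ (q * r ^ (-α)) * r ^ (n:ℝ) :=
            mul_le_mul_of_nonneg_right hle2 (Real.rpow_nonneg hr0.le _)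
        _ = q * r ^ ((n:ℝ) - α) := by
            rw [show (n:ℝ) - α = -α + (n:ℝ) by ring, Real.rpow_add hr0]; ring
    · rw [show ((n:ℝ) - α) = -(α - (n:ℝ)) by ring]
      have h := tendsto_rpow_neg_atTop (show (0:ℝ) < α - (n:ℝ) by linarith)
      have := h.const_mul q
      simpa using this
  have hsum_int : IntegrableOn (fun x : ℝ =>
      (n:ℝ) * ((1 - Real.exp (-(q * x ^ (-α)))) * x ^ ((n:ℝ) - 1))
        - q * α * (Real.exp (-(q * x ^ (-α))) * x ^ ((n:ℝ) - α - 1))) (Set.Ioi r₀) :=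
    (I1.const_mul _).sub (I2.const_mul _)
  have hFTC := integral_Ioi_of_hasDerivAt_of_tendsto' hderiv hsum_int htend
  rw [MeasureTheory.integral_sub (I1.const_mul _) (I2.const_mul _),
    integral_const_mul, integral_const_mul] at hFTC
  rw [← hu₀def] at hFTC
  -- change of variables u = q r^{-α}
  have hderiv2 : ∀ x ∈ Set.Ioi r₀, HasDerivWithinAt (fun r : ℝ => q * r ^ (-α))
      (q * (-α * x ^ (-α - 1))) (Set.Ioi r₀) x := by
    intro x hx
    have hx0 : (0:ℝ) < x := lt_trans hr₀ hx
    exact ((Real.hasDerivAt_rpow_const (p := -α)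
      (Or.inl hx0.ne')).const_mul q).hasDerivWithinAt
  have hanti : StrictAntiOn (fun r : ℝ => q * r ^ (-α)) (Set.Ioi r₀) := by
    intro a ha b hb hab
    exact mul_lt_mul_of_pos_left
      (Real.rpow_lt_rpow_of_neg (lt_trans hr₀ ha) hab (neg_lt_zero.mpr hα0)) hq
  have himg : (fun r : ℝ => q * r ^ (-α)) '' Set.Ioi r₀ = Set.Ioo 0 u₀ := by
    ext u
    constructor
    · rintro ⟨r, hr, rfl⟩
      have hr0 : (0:ℝ) < r := lt_trans hr₀ hr
      exact ⟨by positivity, mul_lt_mul_of_pos_left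
        (Real.rpow_lt_rpow_of_neg hr₀ hr (neg_lt_zero.mpr hα0)) hq⟩
    · rintro ⟨hu1, hu2⟩
      refine ⟨(q / u) ^ α⁻¹, ?_, ?_⟩
      · have h1 : r₀ ^ α < q / u := by
          rw [lt_div_iff₀ hu1]
          calc r₀ ^ α * u < r₀ ^ α * (q * r₀ ^ (-α)) :=
                mul_lt_mul_of_pos_left hu2 (Real.rpow_pos_of_pos hr₀ α)
            _ = q * (r₀ ^ α * r₀ ^ (-α)) := by ring
            _ = q := by rw [← Real.rpow_add hr₀, add_neg_cancel, Real.rpow_zero, mul_one]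
        have h2 : (r₀ ^ α) ^ α⁻¹ < (q / u) ^ α⁻¹ :=
          Real.rpow_lt_rpow (Real.rpow_nonneg hr₀.le α) h1 (inv_pos.mpr hα0)
        rwa [← Real.rpow_mul hr₀.le, mul_inv_cancel₀ hα0.ne', Real.rpow_one] at h2
      · have hquu : (0:ℝ) < q / u := div_pos hq hu1
        show q * ((q / u) ^ α⁻¹) ^ (-α) = u
        rw [← Real.rpow_mul hquu.le, show α⁻¹ * -α = -1 by field_simp,
          Real.rpow_neg_one]
        field_simp
  have hsub := integral_image_eq_integral_abs_deriv_smul measurableSet_Ioi hderiv2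
    (hanti.injOn) (fun u : ℝ => Real.exp (-u) * u ^ (-δ))
  rw [himg] at hsub
  have hptwise : ∀ r ∈ Set.Ioi r₀,
      |q * (-α * r ^ (-α - 1))| • (Real.exp (-(q * r ^ (-α))) * (q * r ^ (-α)) ^ (-δ))
      = (q ^ (-δ) * (q * α)) * (Real.exp (-(q * r ^ (-α))) * r ^ ((n:ℝ) - α - 1)) := by
    intro r hr
    have hr0 : (0:ℝ) < r := lt_trans hr₀ hr
    have habs : |q * (-α * r ^ (-α - 1))| = q * α * r ^ (-α - 1) := by
      have hneg : q * (-α * r ^ (-α - 1)) ≤ 0 := by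
        nlinarith [mul_pos (mul_pos hq hα0) (Real.rpow_pos_of_pos hr0 (-α - 1))]
      rw [abs_of_nonpos hneg]
      ring
    have hpow : (q * r ^ (-α)) ^ (-δ) = q ^ (-δ) * r ^ ((n:ℝ)) := by
      rw [Real.mul_rpow hq.le (Real.rpow_nonneg hr0.le _), ← Real.rpow_mul hr0.le,
        show -α * -δ = α * δ by ring, hαδ]
    rw [habs, hpow, smul_eq_mul,
      show (n:ℝ) - α - 1 = (-α - 1) + (n:ℝ) by ring, Real.rpow_add hr0]
    ring
  rw [MeasureTheory.setIntegral_congr_fun measurableSet_Ioi hptwise,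
    integral_const_mul] at hsub
  -- assemble
  have hgam := gamma_split hδ1 hu₀
  have htail := tail_integral_eq u₀ δ hu₀
  have hparts := genExpInt_parts hu₀ hδ0
  have hQq : q ^ δ * q ^ (-δ) = 1 := by
    rw [← Real.rpow_add hq, add_neg_cancel, Real.rpow_zero]
  have hqu : q ^ δ * u₀ ^ (1 - δ) = r₀ ^ (n:ℝ) * u₀ := by
    rw [hu₀def, show (1:ℝ) - δ = 1 + (-δ) by ring, Real.rpow_add (by positivity),
      Real.rpow_one, Real.mul_rpow hq.le (Real.rpow_nonneg hr₀.le _),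
      ← Real.rpow_mul hr₀.le, show -α * -δ = α * δ by ring, hαδ]
    linear_combination (q * r₀ ^ (-α) * r₀ ^ ((n:ℝ))) * hQq
  set A := ∫ r in Set.Ioi r₀, (1 - Real.exp (-(q * r ^ (-α)))) * r ^ ((n:ℝ) - 1) with hA
  set B := ∫ r in Set.Ioi r₀, Real.exp (-(q * r ^ (-α))) * r ^ ((n:ℝ) - α - 1) with hB
  set G := ∫ x in Set.Ioo (0:ℝ) u₀, Real.exp (-x) * x ^ (-δ) with hG
  set T := ∫ x in Set.Ioi u₀, Real.exp (-x) * x ^ (-δ) with hT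
  -- hFTC : n*A - q*α*B = 0 - (1 - exp(-u₀)) * r₀^n
  -- hsub : G = q^(-δ)*(q*α) * B
  have e1 : q * α * B = q ^ δ * G := by
    calc q * α * B = (q ^ δ * q ^ (-δ)) * (q * α * B) := by rw [hQq]; ring
      _ = q ^ δ * (q ^ (-δ) * (q * α) * B) := by ring
      _ = q ^ δ * G := by rw [← hsub]
  have e2 : q ^ δ * T = r₀ ^ (n:ℝ) * u₀ * genExpInt δ u₀ := by
    rw [htail, ← mul_assoc, hqu]
  have e3 : r₀ ^ (n:ℝ) * u₀ * genExpInt δ u₀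
      = r₀ ^ (n:ℝ) * Real.exp (-u₀) - r₀ ^ (n:ℝ) * δ * genExpInt (1 + δ) u₀ := by
    linear_combination (r₀ ^ (n:ℝ)) * hparts
  have hGT : G = Real.Gamma (1 - δ) - T := hgam
  calc (n:ℝ) * A = q * α * B - (1 - Real.exp (-u₀)) * r₀ ^ (n:ℝ) := by linarith
    _ = q ^ δ * Real.Gamma (1 - δ) - q ^ δ * T - (1 - Real.exp (-u₀)) * r₀ ^ (n:ℝ) := by
        rw [e1, hGT]; ring
    _ = -(r₀ ^ (n : ℝ)) + q ^ δ * Real.Gamma (1 - δ)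
        + r₀ ^ (n : ℝ) * δ * genExpInt (1 + δ) u₀ := by
        rw [e2, e3]; ring
end

section
/- Let 0 < a < 1 and ν > 0 be real numbers and k, l ∈ ℕ. Then ∑_{m=0}^∞ (a^m)^k·(1 − a^m)^l·Po(m;ν) = ∑_{j=0}^l C(l,j)·(−1)^j·e^{−ν·(1 − a^{k+j})}, where C(l,j) is the binomial coefficient. Equivalently, for M ~ Po(ν), E[(a^M)^k·(1 − a^M)^l] = f_d(ν,a;k,l). -/
open Real Filter Set MeasureTheory

/-- Poisson PMF with parameter `ν` evaluated at `m`. -/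
noncomputable def poissonPMF (ν : ℝ) (m : ℕ) : ℝ :=
  Real.exp (-ν) * ν ^ m / (Nat.factorial m : ℝ)

/-- `fd ν a k l = ∑_{j=0}^l C(l,j)·(−1)^j·e^{−ν(1−a^{k+j})}`. -/
noncomputable def fd (ν a : ℝ) (k l : ℕ) : ℝ :=
  ∑ j ∈ Finset.range (l + 1),
    (Nat.choose l j : ℝ) * (-1) ^ j * Real.exp (-(ν * (1 - a ^ (k + j))))

lemma pois_eq (ν c : ℝ) (m : ℕ) :
    c ^ m * poissonPMF ν m = Real.exp (-ν) * ((c * ν) ^ m / (Nat.factorial m : ℝ)) := by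
  simp [poissonPMF, mul_pow]; ring

lemma pois_summable (ν c : ℝ) : Summable (fun m : ℕ => c ^ m * poissonPMF ν m) := by
  simp only [pois_eq]
  exact (Real.summable_pow_div_factorial (c * ν)).mul_left _

lemma pois_tsum (ν c : ℝ) :
    ∑' m : ℕ, c ^ m * poissonPMF ν m = Real.exp (-(ν * (1 - c))) := by
  simp only [pois_eq]
  rw [tsum_mul_left]
  have : ∑' m : ℕ, (c * ν) ^ m / (Nat.factorial m : ℝ) = Real.exp (c * ν) := by
    rw [Real.exp_eq_exp_ℝ, NormedSpace.exp_eq_tsum_div]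
  rw [this, ← Real.exp_add]
  ring_nf

lemma binom_expand (x : ℝ) (l : ℕ) :
    (1 - x) ^ l = ∑ j ∈ Finset.range (l + 1), (Nat.choose l j : ℝ) * (-1) ^ j * x ^ j := by
  rw [sub_eq_add_neg, add_comm, add_pow]
  refine Finset.sum_congr rfl fun j hj => ?_
  rw [neg_pow]
  ring

theorem poisson_moment_identity
    (a ν : ℝ) (ha0 : 0 < a) (ha1 : a < 1) (hν : 0 < ν) (k l : ℕ) :
    ∑' m : ℕ, (a ^ m) ^ k * (1 - a ^ m) ^ l * poissonPMF ν m = fd ν a k l := by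
  have key : ∀ m : ℕ, (a ^ m) ^ k * (1 - a ^ m) ^ l * poissonPMF ν m
      = ∑ j ∈ Finset.range (l + 1),
        (Nat.choose l j : ℝ) * (-1) ^ j * ((a ^ (k + j)) ^ m * poissonPMF ν m) := by
    intro m
    rw [binom_expand (a ^ m) l, Finset.mul_sum, Finset.sum_mul]
    refine Finset.sum_congr rfl fun j hj => ?_
    rw [← pow_mul, ← pow_mul, ← pow_mul a (k+j), Nat.add_mul, pow_add]
    ring
  simp only [key]
  rw [Summable.tsum_finsetSum (fun j _ => by
    simpa using ((pois_summable ν (a ^ (k + j))).mul_left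
      ((Nat.choose l j : ℝ) * (-1) ^ j)))]
  unfold fd
  refine Finset.sum_congr rfl fun j hj => ?_
  rw [tsum_mul_left, pois_tsum]
end
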